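/- arXiv:2005.11492 — 7 statements merged into one kernel-verified Lean document; each statement's English description precedes it below -/
import Mathlib

section
/- Consider a nonlinear NI system H₁ with storage function V₁ and a nonlinear OSNI system H₂ with storage function V₂ and output strictness δ > 0, interconnected in positive feedback (u₁ = y₂, u₂ = y₁). Suppose Assumptions I, II and III hold for H₁ and H₂. If the function W(x₁,x₂) = V₁(x₁) + V₂(x₂) − h₁(x₁)ᵀh₂(x₂) is positive definite, then the equilibrium point (x₁,x₂) = (0,0) of the closed-loop interconnection is asymptotically stable (i.e., it is Lyapunov stable and trajectories starting sufficiently close to the origin converge to the origin as t → ∞). -/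
noncomputable section

open scoped RealInnerProductSpace
open Filter Topology
open scoped NNReal
set_option maxHeartbeats 1600000

abbrev Vec (n : ℕ) : Type := EuclideanSpace ℝ (Fin n)

def IsTrajectory {p m : ℕ} (f : Vec p → Vec m → Vec p)
    (x : ℝ → Vec p) (u : ℝ → Vec m) : Prop :=
  ∀ t : ℝ, HasDerivAt x (f (x t) (u t)) t

def PosDefFn {E : Type*} [Zero E] (V : E → ℝ) : Prop :=
  V 0 = 0 ∧ ∀ x, x ≠ 0 → 0 < V x

def NIStorage {p m : ℕ} (f : Vec p → Vec m → Vec p) (h : Vec p → Vec m)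
    (V : Vec p → ℝ) : Prop :=
  ∀ (x : ℝ → Vec p) (u : ℝ → Vec m), IsTrajectory f x u →
    ∀ t : ℝ, deriv (fun s => V (x s)) t ≤ ⟪u t, deriv (fun s => h (x s)) t⟫

def OSNIStorage {p m : ℕ} (f : Vec p → Vec m → Vec p) (h : Vec p → Vec m)
    (V : Vec p → ℝ) (δ : ℝ) : Prop :=
  ∀ (x : ℝ → Vec p) (u : ℝ → Vec m), IsTrajectory f x u →
    ∀ t : ℝ, deriv (fun s => V (x s)) t ≤
      ⟪u t, deriv (fun s => h (x s)) t⟫ - δ * ‖deriv (fun s => h (x s)) t‖ ^ 2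

def linF {q m : ℕ} (A : Matrix (Fin q) (Fin q) ℝ) (B : Matrix (Fin q) (Fin m) ℝ) :
    Vec q → Vec m → Vec q :=
  fun x u => Matrix.toEuclideanLin A x + Matrix.toEuclideanLin B u

def linH {q m : ℕ} (C : Matrix (Fin m) (Fin q) ℝ) : Vec q → Vec m :=
  fun x => Matrix.toEuclideanLin C x

/-- Assumption I for a system (f, h): over any nondegenerate time interval, the output
remains constant iff the state remains constant; moreover the state is identically zero
iff the output is identically zero. -/
def AssumptionI {p m : ℕ} (f : Vec p → Vec m → Vec p) (h : Vec p → Vec m) : Prop :=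
  ∀ (x : ℝ → Vec p) (u : ℝ → Vec m), IsTrajectory f x u →
    ∀ ta tb : ℝ, ta < tb →
      (((∀ s ∈ Set.Icc ta tb, ∀ s' ∈ Set.Icc ta tb, x s = x s') ↔
          (∀ s ∈ Set.Icc ta tb, ∀ s' ∈ Set.Icc ta tb, h (x s) = h (x s'))) ∧
        ((∀ s ∈ Set.Icc ta tb, x s = 0) ↔ (∀ s ∈ Set.Icc ta tb, h (x s) = 0)))

/-- Assumption II for a system (f, h): over any nondegenerate time interval, the state
remaining constant implies the input remains constant; moreover the state being
identically zero implies the input is identically zero. -/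
def AssumptionII {p m : ℕ} (f : Vec p → Vec m → Vec p) (h : Vec p → Vec m) : Prop :=
  ∀ (x : ℝ → Vec p) (u : ℝ → Vec m), IsTrajectory f x u →
    ∀ ta tb : ℝ, ta < tb →
      (((∀ s ∈ Set.Icc ta tb, ∀ s' ∈ Set.Icc ta tb, x s = x s') →
          (∀ s ∈ Set.Icc ta tb, ∀ s' ∈ Set.Icc ta tb, u s = u s')) ∧
        ((∀ s ∈ Set.Icc ta tb, x s = 0) → (∀ s ∈ Set.Icc ta tb, u s = 0)))

/-- Assumption III for the open-loop cascade of H₁ = (f₁, h₁) followed by H₂ = (f₂, h₂):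
there is a uniform constant γ ∈ (0,1) such that whenever H₁ is driven by a constant input
u₁bar, its output is fed as input to H₂, and the output of H₂ is constant, y₂(t) ≡ y₂bar,
one has u₁barᵀ y₂bar ≤ γ |u₁bar|². -/
def AssumptionIII {p m : ℕ} (f₁ : Vec p → Vec m → Vec p) (h₁ : Vec p → Vec m)
    (f₂ : Vec p → Vec m → Vec p) (h₂ : Vec p → Vec m) (γ : ℝ) : Prop :=
  ∀ (x₁ : ℝ → Vec p) (u₁ : ℝ → Vec m) (x₂ : ℝ → Vec p)
    (u₁bar y₂bar : Vec m) (ta tb : ℝ), ta < tb →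
    IsTrajectory f₁ x₁ u₁ →
    IsTrajectory f₂ x₂ (fun t => h₁ (x₁ t)) →
    (∀ s ∈ Set.Icc ta tb, u₁ s = u₁bar) →
    (∀ s ∈ Set.Icc ta tb, h₂ (x₂ s) = y₂bar) →
    ⟪u₁bar, y₂bar⟫ ≤ γ * ‖u₁bar‖ ^ 2

/-- The positive feedback interconnection of H₁ = (f₁, h₁) and H₂ = (f₂, h₂) with zero
external input: u₁ = y₂ and u₂ = y₁. -/
def ClosedLoop {p m : ℕ} (f₁ : Vec p → Vec m → Vec p) (h₁ : Vec p → Vec m)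
    (f₂ : Vec p → Vec m → Vec p) (h₂ : Vec p → Vec m)
    (x₁ x₂ : ℝ → Vec p) : Prop :=
  IsTrajectory f₁ x₁ (fun t => h₂ (x₂ t)) ∧
  IsTrajectory f₂ x₂ (fun t => h₁ (x₁ t))

lemma W_hasDeriv {p m : ℕ} {f₁ f₂ : Vec p → Vec m → Vec p} {h₁ h₂ : Vec p → Vec m}
    (hh₁ : ContDiff ℝ 1 h₁) (hh₂ : ContDiff ℝ 1 h₂)
    {V₁ V₂ : Vec p → ℝ} (hV₁c : ContDiff ℝ 1 V₁) (hV₂c : ContDiff ℝ 1 V₂)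
    {δ : ℝ} (hNI : NIStorage f₁ h₁ V₁) (hOSNI : OSNIStorage f₂ h₂ V₂ δ)
    {x₁ x₂ : ℝ → Vec p} (hx : ClosedLoop f₁ h₁ f₂ h₂ x₁ x₂) (t : ℝ) :
    DifferentiableAt ℝ (fun s => V₁ (x₁ s) + V₂ (x₂ s) - ⟪h₁ (x₁ s), h₂ (x₂ s)⟫) t ∧
    deriv (fun s => V₁ (x₁ s) + V₂ (x₂ s) - ⟪h₁ (x₁ s), h₂ (x₂ s)⟫) t ≤
      -δ * ‖deriv (fun s => h₂ (x₂ s)) t‖ ^ 2 := by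
  have hdx₁ : DifferentiableAt ℝ x₁ t := (hx.1 t).differentiableAt
  have hdx₂ : DifferentiableAt ℝ x₂ t := (hx.2 t).differentiableAt
  have hdy₁ : DifferentiableAt ℝ (fun s => h₁ (x₁ s)) t :=
    DifferentiableAt.comp t ((hh₁.differentiable one_ne_zero) _) hdx₁
  have hdy₂ : DifferentiableAt ℝ (fun s => h₂ (x₂ s)) t :=
    DifferentiableAt.comp t ((hh₂.differentiable one_ne_zero) _) hdx₂
  have hdV₁ : DifferentiableAt ℝ (fun s => V₁ (x₁ s)) t :=
    DifferentiableAt.comp t ((hV₁c.differentiable one_ne_zero) _) hdx₁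
  have hdV₂ : DifferentiableAt ℝ (fun s => V₂ (x₂ s)) t :=
    DifferentiableAt.comp t ((hV₂c.differentiable one_ne_zero) _) hdx₂
  have hinner : HasDerivAt (fun s => ⟪h₁ (x₁ s), h₂ (x₂ s)⟫)
      (⟪h₁ (x₁ t), deriv (fun s => h₂ (x₂ s)) t⟫ +
        ⟪deriv (fun s => h₁ (x₁ s)) t, h₂ (x₂ t)⟫) t :=
    HasDerivAt.inner ℝ hdy₁.hasDerivAt hdy₂.hasDerivAt
  have hW : HasDerivAt (fun s => V₁ (x₁ s) + V₂ (x₂ s) - ⟪h₁ (x₁ s), h₂ (x₂ s)⟫)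
      (deriv (fun s => V₁ (x₁ s)) t + deriv (fun s => V₂ (x₂ s)) t -
        (⟪h₁ (x₁ t), deriv (fun s => h₂ (x₂ s)) t⟫ +
          ⟪deriv (fun s => h₁ (x₁ s)) t, h₂ (x₂ t)⟫)) t :=
    (hdV₁.hasDerivAt.add hdV₂.hasDerivAt).sub hinner
  refine ⟨hW.differentiableAt, ?_⟩
  rw [hW.deriv]
  have h1 := hNI x₁ (fun s => h₂ (x₂ s)) hx.1 t
  have h2 := hOSNI x₂ (fun s => h₁ (x₁ s)) hx.2 t
  have hcomm : ⟪deriv (fun s => h₁ (x₁ s)) t, h₂ (x₂ t)⟫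
      = ⟪h₂ (x₂ t), deriv (fun s => h₁ (x₁ s)) t⟫ := real_inner_comm _ _
  have hcomm2 : ⟪h₁ (x₁ t), deriv (fun s => h₂ (x₂ s)) t⟫
      = ⟪h₁ (x₁ t), deriv (fun s => h₂ (x₂ s)) t⟫ := rfl
  linarith

lemma traj_dist' {E : Type*} [NormedAddCommGroup E] [NormedSpace ℝ E]
    {F : E → E} {K : Set E} {C : ℝ≥0} (hF : LipschitzOnWith C F K)
    {ζ η : ℝ → E} (hζ : ∀ t, HasDerivAt ζ (F (ζ t)) t)
    (hη : ∀ t, HasDerivAt η (F (η t)) t) {a b : ℝ}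
    (hζm : ∀ t ∈ Set.Icc a b, ζ t ∈ K) (hηm : ∀ t ∈ Set.Icc a b, η t ∈ K) :
    ∀ t ∈ Set.Icc a b, dist (ζ t) (η t) ≤ dist (ζ a) (η a) * Real.exp (C * (t - a)) :=
  dist_le_of_trajectories_ODE_of_mem (v := fun _ x => F x) (s := fun _ => K)
    (fun _ _ => hF)
    (fun u _ => (hζ u).continuousAt.continuousWithinAt)
    (fun u _ => (hζ u).hasDerivWithinAt)
    (fun u hu => hζm u (Set.Ico_subset_Icc_self hu))
    (fun u _ => (hη u).continuousAt.continuousWithinAt)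
    (fun u _ => (hη u).hasDerivWithinAt)
    (fun u hu => hηm u (Set.Ico_subset_Icc_self hu))
    le_rfl

lemma traj_dist_rev' {E : Type*} [NormedAddCommGroup E] [NormedSpace ℝ E]
    {F : E → E} {K : Set E} {C : ℝ≥0} (hF : LipschitzOnWith C F K)
    {ζ η : ℝ → E} (hζ : ∀ t, HasDerivAt ζ (F (ζ t)) t)
    (hη : ∀ t, HasDerivAt η (F (η t)) t) {a b : ℝ}
    (hζm : ∀ t ∈ Set.Icc a b, ζ t ∈ K) (hηm : ∀ t ∈ Set.Icc a b, η t ∈ K) :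
    ∀ t ∈ Set.Icc a b, dist (ζ t) (η t) ≤ dist (ζ b) (η b) * Real.exp (C * (b - t)) := by
  intro t ht
  have hF' : LipschitzOnWith C (fun x => -(F x)) K := fun x hx y hy => by
    simpa [edist_neg_neg] using hF hx hy
  have hrev : ∀ (ξ : ℝ → E), (∀ u, HasDerivAt ξ (F (ξ u)) u) →
      ∀ u : ℝ, HasDerivAt (fun s => ξ (-s)) (-(F (ξ (-u)))) u := by
    intro ξ hξ u
    have h1 : HasDerivAt (fun s : ℝ => -s) (-1 : ℝ) u := hasDerivAt_neg u
    have := HasDerivAt.scomp u (hξ (-u)) h1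
    simpa [Function.comp_def] using this
  have key := traj_dist' hF' (ζ := fun s => ζ (-s)) (η := fun s => η (-s))
    (hrev ζ hζ) (hrev η hη) (a := -b) (b := -a)
    (fun u hu => hζm (-u) ⟨by linarith [hu.2], by linarith [hu.1]⟩)
    (fun u hu => hηm (-u) ⟨by linarith [hu.2], by linarith [hu.1]⟩)
    (-t) ⟨by linarith [ht.2], by linarith [ht.1]⟩
  simpa [neg_neg, show -t - -b = b - t by ring] using key

lemma traj_shift {E : Type*} [NormedAddCommGroup E] [NormedSpace ℝ E]
    {F : E → E} {z : ℝ → E} (hz : ∀ t, HasDerivAt z (F (z t)) t) (c : ℝ) :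
    ∀ t, HasDerivAt (fun u => z (c + u)) (F (z (c + t))) t := by
  intro t
  have h1 : HasDerivAt (fun u : ℝ => c + u) (1 : ℝ) t := (hasDerivAt_id t).const_add c
  have := HasDerivAt.scomp t (hz (c + t)) h1
  simpa [Function.comp_def] using this

lemma W_cont {p m : ℕ} {h₁ h₂ : Vec p → Vec m} (hh₁ : ContDiff ℝ 1 h₁) (hh₂ : ContDiff ℝ 1 h₂)
    {V₁ V₂ : Vec p → ℝ} (hV₁c : ContDiff ℝ 1 V₁) (hV₂c : ContDiff ℝ 1 V₂) :
    Continuous (fun z : Vec p × Vec p => V₁ z.1 + V₂ z.2 - ⟪h₁ z.1, h₂ z.2⟫) :=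
  ((hV₁c.continuous.comp continuous_fst).add (hV₂c.continuous.comp continuous_snd)).sub
    (Continuous.inner (hh₁.continuous.comp continuous_fst) (hh₂.continuous.comp continuous_snd))

-- nonnegativity of a positive definite function

lemma posdef_nonneg {E : Type*} [Zero E] {V : E → ℝ} (h : PosDefFn V) : ∀ x, 0 ≤ V x := by
  intro x
  rcases eq_or_ne x 0 with rfl | hx
  · exact le_of_eq h.1.symm
  · exact (h.2 x hx).le

-- stability lemma

lemma stab {p m : ℕ} (hp : 0 < p) {f₁ f₂ : Vec p → Vec m → Vec p} {h₁ h₂ : Vec p → Vec m}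
    (hh₁ : ContDiff ℝ 1 h₁) (hh₂ : ContDiff ℝ 1 h₂)
    {V₁ V₂ : Vec p → ℝ} (hV₁c : ContDiff ℝ 1 V₁) (hV₂c : ContDiff ℝ 1 V₂)
    (hW : PosDefFn (fun z : Vec p × Vec p => V₁ z.1 + V₂ z.2 - ⟪h₁ z.1, h₂ z.2⟫))
    (hmono : ∀ x₁ x₂ : ℝ → Vec p, ClosedLoop f₁ h₁ f₂ h₂ x₁ x₂ →
      Antitone (fun t => V₁ (x₁ t) + V₂ (x₂ t) - ⟪h₁ (x₁ t), h₂ (x₂ t)⟫)) :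
    ∀ ε > (0 : ℝ), ∃ r > (0 : ℝ), ∀ x₁ x₂ : ℝ → Vec p,
      ClosedLoop f₁ h₁ f₂ h₂ x₁ x₂ → ‖x₁ 0‖ < r → ‖x₂ 0‖ < r →
      ∀ t ≥ (0 : ℝ), ‖((x₁ t, x₂ t) : Vec p × Vec p)‖ < ε := by
  intro ε hε
  set Wf : Vec p × Vec p → ℝ := fun z => V₁ z.1 + V₂ z.2 - ⟪h₁ z.1, h₂ z.2⟫ with hWf
  have hWc : Continuous Wf := W_cont hh₁ hh₂ hV₁c hV₂c
  -- the sphere of radius ε is nonempty and compact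
  have hne : (Metric.sphere (0 : Vec p × Vec p) ε).Nonempty := by
    refine ⟨(ε • EuclideanSpace.single (⟨0, hp⟩ : Fin p) (1 : ℝ), (0 : Vec p)), ?_⟩
    simp [Prod.norm_def, norm_smul, abs_of_pos hε, le_of_lt hε]
  obtain ⟨z₀, hz₀S, hz₀min⟩ :=
    (isCompact_sphere (0 : Vec p × Vec p) ε).exists_isMinOn hne hWc.continuousOn
  have hz₀norm : ‖z₀‖ = ε := mem_sphere_zero_iff_norm.1 hz₀S
  have hz₀ne : z₀ ≠ 0 := by
    intro h; rw [h, norm_zero] at hz₀norm; exact absurd hz₀norm.symm (ne_of_gt hε)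
  set c := Wf z₀ with hc
  have hcpos : 0 < c := hW.2 z₀ hz₀ne
  -- choose r using continuity of W at 0
  obtain ⟨r', hr', hball⟩ := Metric.continuousAt_iff.1 hWc.continuousAt c hcpos
  refine ⟨min r' ε, lt_min hr' hε, ?_⟩
  intro x₁ x₂ hx hx₁0 hx₂0 t ht
  set z : ℝ → Vec p × Vec p := fun t => (x₁ t, x₂ t) with hz
  have hz0 : ‖z 0‖ < min r' ε := by
    rw [Prod.norm_def]; exact max_lt hx₁0 hx₂0
  have hW0 : Wf (z 0) < c := by
    have : dist (z 0) 0 < r' := by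
      rw [dist_zero_right]; exact lt_of_lt_of_le hz0 (min_le_left _ _)
    have := hball this
    rw [show Wf (0 : Vec p × Vec p) = 0 from hW.1, dist_zero_right, Real.norm_eq_abs] at this
    exact lt_of_le_of_lt (le_abs_self _) this
  have hanti := hmono x₁ x₂ hx
  have hWt : ∀ s : ℝ, 0 ≤ s → Wf (z s) < c := fun s hs =>
    lt_of_le_of_lt (hanti hs) hW0
  by_contra hcon
  push_neg at hcon
  -- by IVT there is s with ‖z s‖ = ε
  have hzc : Continuous z := by
    have h1 : Continuous x₁ := continuous_iff_continuousAt.2 fun s => (hx.1 s).continuousAt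
    have h2 : Continuous x₂ := continuous_iff_continuousAt.2 fun s => (hx.2 s).continuousAt
    exact h1.prodMk h2
  have hmem : ε ∈ Set.Icc (‖z 0‖) (‖z t‖) :=
    ⟨le_of_lt (lt_of_lt_of_le hz0 (min_le_right _ _)), hcon⟩
  obtain ⟨s, hsI, hs⟩ := intermediate_value_Icc ht (hzc.norm.continuousOn) hmem
  have hsS : z s ∈ Metric.sphere (0 : Vec p × Vec p) ε := mem_sphere_zero_iff_norm.2 hs
  have := isMinOn_iff.1 hz₀min (z s) hsS
  exact absurd (hWt s hsI.1) (not_lt.2 this)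

lemma contdiff_lipschitzOn_ball {E F : Type*} [NormedAddCommGroup E] [NormedSpace ℝ E] [ProperSpace E]
    [NormedAddCommGroup F] [NormedSpace ℝ F] {h : E → F} (hh : ContDiff ℝ 1 h) :
    ∃ C : ℝ≥0, LipschitzOnWith C h (Metric.closedBall (0 : E) 1) := by
  have hcont : Continuous fun x => fderiv ℝ h x := hh.continuous_fderiv one_ne_zero
  obtain ⟨C, hC⟩ := (isCompact_closedBall (0 : E) 1).exists_bound_of_continuousOn
    hcont.continuousOn
  refine ⟨Real.toNNReal C, ?_⟩
  refine Convex.lipschitzOnWith_of_nnnorm_fderiv_le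
    (fun x _ => (hh.differentiable one_ne_zero) x) (fun x hx => ?_) (convex_closedBall _ _)
  rw [← NNReal.coe_le_coe, coe_nnnorm, Real.coe_toNNReal']
  exact le_max_of_le_left (hC x hx)

lemma F_lip {p m : ℕ} {f₁ f₂ : Vec p → Vec m → Vec p} {h₁ h₂ : Vec p → Vec m}
    {K₁ K₂ : NNReal}
    (hf₁ : LipschitzWith K₁ (Function.uncurry f₁))
    (hf₂ : LipschitzWith K₂ (Function.uncurry f₂))
    (hh₁ : ContDiff ℝ 1 h₁) (hh₂ : ContDiff ℝ 1 h₂) :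
    ∃ C : ℝ≥0, LipschitzOnWith C
      (fun z : Vec p × Vec p => ((f₁ z.1 (h₂ z.2), f₂ z.2 (h₁ z.1)) : Vec p × Vec p))
      (Metric.closedBall (0 : Vec p × Vec p) 1) := by
  obtain ⟨C₁, hC₁⟩ := contdiff_lipschitzOn_ball hh₁
  obtain ⟨C₂, hC₂⟩ := contdiff_lipschitzOn_ball hh₂
  set B := Metric.closedBall (0 : Vec p × Vec p) 1
  have hfstm : Set.MapsTo (Prod.fst : Vec p × Vec p → Vec p) B (Metric.closedBall 0 1) := by
    intro z hz
    rw [Metric.mem_closedBall, dist_zero_right] at hz ⊢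
    exact le_trans (norm_fst_le z) hz
  have hsndm : Set.MapsTo (Prod.snd : Vec p × Vec p → Vec p) B (Metric.closedBall 0 1) := by
    intro z hz
    rw [Metric.mem_closedBall, dist_zero_right] at hz ⊢
    exact le_trans (norm_snd_le z) hz
  have hA : LipschitzOnWith (C₂ * 1) (fun z : Vec p × Vec p => h₂ z.2) B :=
    hC₂.comp (LipschitzWith.prod_snd.lipschitzOnWith) hsndm
  have hB : LipschitzOnWith (C₁ * 1) (fun z : Vec p × Vec p => h₁ z.1) B :=
    hC₁.comp (LipschitzWith.prod_fst.lipschitzOnWith) hfstm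
  have hg₁ : LipschitzOnWith (max 1 (C₂ * 1)) (fun z : Vec p × Vec p => (z.1, h₂ z.2)) B :=
    LipschitzOnWith.prodMk (LipschitzWith.prod_fst.lipschitzOnWith) hA
  have hg₂ : LipschitzOnWith (max 1 (C₁ * 1)) (fun z : Vec p × Vec p => (z.2, h₁ z.1)) B :=
    LipschitzOnWith.prodMk (LipschitzWith.prod_snd.lipschitzOnWith) hB
  have h1 := hf₁.comp_lipschitzOnWith hg₁
  have h2 := hf₂.comp_lipschitzOnWith hg₂
  exact ⟨_, h1.prodMk h2⟩

lemma limit_traj {E : Type*} [NormedAddCommGroup E] [NormedSpace ℝ E] [CompleteSpace E]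
    {F : E → E} {C : ℝ≥0} (hF : LipschitzOnWith C F (Metric.closedBall 0 1))
    {z : ℝ → E} (hz : ∀ t, HasDerivAt z (F (z t)) t)
    (hzK : ∀ t : ℝ, 0 ≤ t → z t ∈ Metric.closedBall (0 : E) 1)
    (hKc : IsCompact (Metric.closedBall (0 : E) 1)) :
    ∃ w : ℝ → E, (∀ s, HasDerivAt w (F (w s)) s) ∧
      (∀ s, w s ∈ Metric.closedBall (0 : E) 1) ∧
      ∃ φ : ℕ → ℕ, StrictMono φ ∧
        ∀ s : ℝ, Tendsto (fun k => z ((φ k : ℝ) + s)) atTop (𝓝 (w s)) := by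
  obtain ⟨zstar, hzs, φ, hφ, hφt⟩ :=
    hKc.tendsto_subseq (x := fun n : ℕ => z n) (fun n => hzK n (Nat.cast_nonneg n))
  set τ : ℕ → ℝ := fun k => ((φ k : ℕ) : ℝ) with hτdef
  have hτ : ∀ k : ℕ, (k : ℝ) ≤ τ k := fun k => Nat.cast_le.2 hφ.le_apply
  have hφt' : Tendsto (fun k => z (τ k)) atTop (𝓝 zstar) := hφt
  -- the key Gronwall-type comparison between time-shifts
  have key : ∀ S : ℝ, 0 ≤ S → ∀ k j : ℕ, S ≤ τ k → S ≤ τ j → ∀ s ∈ Set.Icc (-S) S,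
      dist (z (τ k + s)) (z (τ j + s)) ≤ dist (z (τ k)) (z (τ j)) * Real.exp (C * S) := by
    intro S hS k j hk hj s hs
    have hζ := traj_shift hz (τ k)
    have hη := traj_shift hz (τ j)
    have hζm : ∀ u ∈ Set.Icc (-S) S, z (τ k + u) ∈ Metric.closedBall (0 : E) 1 :=
      fun u hu => hzK _ (by linarith [hu.1])
    have hηm : ∀ u ∈ Set.Icc (-S) S, z (τ j + u) ∈ Metric.closedBall (0 : E) 1 :=
      fun u hu => hzK _ (by linarith [hu.1])
    have hexp : Real.exp (C * |s|) ≤ Real.exp (C * S) := by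
      apply Real.exp_le_exp.2
      apply mul_le_mul_of_nonneg_left _ C.coe_nonneg
      exact abs_le.2 ⟨hs.1, hs.2⟩
    rcases le_or_gt 0 s with h0s | h0s
    · have := traj_dist' hF hζ hη (a := 0) (b := S)
        (fun u hu => hζm u ⟨by linarith [hu.1], hu.2⟩)
        (fun u hu => hηm u ⟨by linarith [hu.1], hu.2⟩) s ⟨h0s, hs.2⟩
      simp only [add_zero] at this
      refine le_trans this ?_
      apply mul_le_mul_of_nonneg_left _ dist_nonneg
      apply Real.exp_le_exp.2
      apply mul_le_mul_of_nonneg_left (by linarith [hs.2]) C.coe_nonneg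
    · have := traj_dist_rev' hF hζ hη (a := -S) (b := 0)
        (fun u hu => hζm u ⟨hu.1, by linarith [hu.2]⟩)
        (fun u hu => hηm u ⟨hu.1, by linarith [hu.2]⟩) s ⟨hs.1, h0s.le⟩
      simp only [add_zero] at this
      refine le_trans this ?_
      apply mul_le_mul_of_nonneg_left _ dist_nonneg
      apply Real.exp_le_exp.2
      apply mul_le_mul_of_nonneg_left (by linarith [hs.1]) C.coe_nonneg
  -- the shifted trajectories converge pointwise
  have hCS : ∀ s : ℝ, CauchySeq (fun k => z (τ k + s)) := by
    intro s
    set S := |s| + 1 with hS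
    have hS0 : (0 : ℝ) ≤ S := by positivity
    rw [Metric.cauchySeq_iff]
    intro ε hε
    have hc := hφt'.cauchySeq
    rw [Metric.cauchySeq_iff] at hc
    obtain ⟨N₁, hN₁⟩ := hc (ε / Real.exp (C * S)) (div_pos hε (Real.exp_pos _))
    refine ⟨max N₁ ⌈S⌉₊, fun k hk j hj => ?_⟩
    have hτk : S ≤ τ k :=
      le_trans (le_trans (Nat.le_ceil S) (Nat.cast_le.2 (le_trans (le_max_right _ _) hk))) (hτ k)
    have hτj : S ≤ τ j :=
      le_trans (le_trans (Nat.le_ceil S) (Nat.cast_le.2 (le_trans (le_max_right _ _) hj))) (hτ j)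
    calc dist (z (τ k + s)) (z (τ j + s))
        ≤ dist (z (τ k)) (z (τ j)) * Real.exp (C * S) := by
          refine key S hS0 k j hτk hτj s ⟨?_, ?_⟩
          · linarith [neg_abs_le s]
          · linarith [le_abs_self s]
      _ < (ε / Real.exp (C * S)) * Real.exp (C * S) := by
          exact mul_lt_mul_of_pos_right
            (hN₁ k (le_trans (le_max_left _ _) hk) j (le_trans (le_max_left _ _) hj))
            (Real.exp_pos _)
      _ = ε := div_mul_cancel₀ _ (ne_of_gt (Real.exp_pos _))
  choose w hw using fun s => cauchySeq_tendsto_of_complete (hCS s)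
  have hwK : ∀ s : ℝ, w s ∈ Metric.closedBall (0 : E) 1 := by
    intro s
    refine Metric.isClosed_closedBall.mem_of_tendsto (hw s) ?_
    rw [eventually_atTop]
    refine ⟨⌈|s|⌉₊, fun k hk => hzK _ ?_⟩
    have : |s| ≤ τ k := le_trans (le_trans (Nat.le_ceil _) (Nat.cast_le.2 hk)) (hτ k)
    linarith [neg_abs_le s]
  have hwb : ∀ (s : ℝ) (k : ℕ), |s| + 1 ≤ τ k →
      dist (z (τ k + s)) (w s) ≤ dist (z (τ k)) zstar * Real.exp (C * (|s| + 1)) := by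
    intro s k hk
    set S := |s| + 1 with hS
    have hS0 : (0 : ℝ) ≤ S := by positivity
    have h1 : Tendsto (fun j => dist (z (τ k + s)) (z (τ j + s))) atTop
        (𝓝 (dist (z (τ k + s)) (w s))) := tendsto_const_nhds.dist (hw s)
    have h2 : Tendsto (fun j => dist (z (τ k)) (z (τ j)) * Real.exp (C * S)) atTop
        (𝓝 (dist (z (τ k)) zstar * Real.exp (C * S))) :=
      (tendsto_const_nhds.dist hφt').mul_const _
    refine le_of_tendsto_of_tendsto h1 h2 ?_
    rw [Filter.EventuallyLE, eventually_atTop]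
    refine ⟨⌈S⌉₊, fun j hj => ?_⟩
    have hτj : S ≤ τ j := le_trans (le_trans (Nat.le_ceil _) (Nat.cast_le.2 hj)) (hτ j)
    exact key S hS0 k j hk hτj s ⟨by linarith [neg_abs_le s], by linarith [le_abs_self s]⟩
  -- the limit is a trajectory of the closed-loop vector field
  have hwT : ∀ s₀ : ℝ, HasDerivAt w (F (w s₀)) s₀ := by
    intro s₀
    set S := |s₀| + 1 with hS
    have hS0 : (0 : ℝ) ≤ S := by positivity
    refine hasDerivAt_of_tendstoUniformlyOn (f := fun (k : ℕ) u => z (τ k + u))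
      (f' := fun (k : ℕ) u => F (z (τ k + u))) (g' := fun u => F (w u)) (l := atTop)
      (isOpen_Ioo (a := -S) (b := S)) ?_ ?_ ?_ ?_
    · rw [Metric.tendstoUniformlyOn_iff]
      intro ε hε
      have hd : Tendsto (fun k => dist (z (τ k)) zstar) atTop (𝓝 0) :=
        tendsto_iff_dist_tendsto_zero.1 hφt'
      have hd2 : Tendsto (fun k => (C : ℝ) * (dist (z (τ k)) zstar * Real.exp (C * (S + 1))))
          atTop (𝓝 0) := by
        have := (hd.mul_const (Real.exp (C * (S + 1)))).const_mul (C : ℝ)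
        simpa using this
      have hev := hd2.eventually (gt_mem_nhds hε)
      rw [eventually_atTop] at hev ⊢
      obtain ⟨N₂, hN₂⟩ := hev
      refine ⟨max N₂ ⌈S + 1⌉₊, fun k hk u hu => ?_⟩
      have hτk : S + 1 ≤ τ k := le_trans (le_trans (Nat.le_ceil _)
        (Nat.cast_le.2 (le_trans (le_max_right _ _) hk))) (hτ k)
      have hu1 : |u| ≤ S := abs_le.2 ⟨hu.1.le, hu.2.le⟩
      have hmem1 : w u ∈ Metric.closedBall (0 : E) 1 := hwK u
      have hmem2 : z (τ k + u) ∈ Metric.closedBall (0 : E) 1 := hzK _ (by linarith [hu.1, hτk])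
      have hlip := hF.dist_le_mul _ hmem1 _ hmem2
      have hb := hwb u k (by linarith)
      rw [dist_comm (z (τ k + u)) (w u)] at hb
      have hexp : Real.exp (C * (|u| + 1)) ≤ Real.exp (C * (S + 1)) := by
        apply Real.exp_le_exp.2
        apply mul_le_mul_of_nonneg_left (by linarith) C.coe_nonneg
      calc dist (F (w u)) (F (z (τ k + u))) ≤ C * dist (w u) (z (τ k + u)) := hlip
        _ ≤ (C : ℝ) * (dist (z (τ k)) zstar * Real.exp (C * (S + 1))) := by
            apply mul_le_mul_of_nonneg_left _ C.coe_nonneg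
            exact le_trans hb (mul_le_mul_of_nonneg_left hexp dist_nonneg)
        _ < ε := hN₂ k (le_trans (le_max_left _ _) hk)
    · exact Filter.Eventually.of_forall (fun k u _ => traj_shift hz (τ k) u)
    · exact fun u _ => hw u
    · constructor
      · linarith [neg_abs_le s₀]
      · linarith [le_abs_self s₀]
  exact ⟨w, hwT, hwK, φ, hφ, hw⟩

/-- The positive feedback interconnection of a nonlinear NI system H₁
and a nonlinear OSNI system H₂ satisfying Assumptions I–III, with
W(x₁,x₂) = V₁(x₁) + V₂(x₂) − h₁(x₁)ᵀh₂(x₂) positive definite, is asymptotically stable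
at the origin: it is Lyapunov stable and trajectories starting sufficiently close to the
origin converge to the origin as t → ∞. -/
theorem stmt0 {p m : ℕ}
    (f₁ f₂ : Vec p → Vec m → Vec p) (h₁ h₂ : Vec p → Vec m)
    (K₁ K₂ : NNReal)
    (hf₁ : LipschitzWith K₁ (Function.uncurry f₁))
    (hf₂ : LipschitzWith K₂ (Function.uncurry f₂))
    (hh₁ : ContDiff ℝ 1 h₁) (hh₂ : ContDiff ℝ 1 h₂)
    (V₁ V₂ : Vec p → ℝ)
    (hV₁c : ContDiff ℝ 1 V₁) (hV₂c : ContDiff ℝ 1 V₂)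
    (hV₁pd : PosDefFn V₁) (hV₂pd : PosDefFn V₂)
    (δ : ℝ) (hδ : 0 < δ)
    (hNI : NIStorage f₁ h₁ V₁)
    (hOSNI : OSNIStorage f₂ h₂ V₂ δ)
    (hAI₁ : AssumptionI f₁ h₁) (hAI₂ : AssumptionI f₂ h₂)
    (hAII₁ : AssumptionII f₁ h₁) (hAII₂ : AssumptionII f₂ h₂)
    (γ : ℝ) (hγ0 : 0 < γ) (hγ1 : γ < 1)
    (hAIII : AssumptionIII f₁ h₁ f₂ h₂ γ)
    (hW : PosDefFn (fun z : Vec p × Vec p => V₁ z.1 + V₂ z.2 - ⟪h₁ z.1, h₂ z.2⟫)) :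
    -- Lyapunov stability of the equilibrium (0,0)
    (∀ ε > (0 : ℝ), ∃ r > (0 : ℝ), ∀ x₁ x₂ : ℝ → Vec p,
        ClosedLoop f₁ h₁ f₂ h₂ x₁ x₂ → ‖x₁ 0‖ < r → ‖x₂ 0‖ < r →
        ∀ t ≥ (0 : ℝ), ‖x₁ t‖ < ε ∧ ‖x₂ t‖ < ε) ∧
    -- local attractivity of the equilibrium (0,0)
    (∃ r > (0 : ℝ), ∀ x₁ x₂ : ℝ → Vec p,
        ClosedLoop f₁ h₁ f₂ h₂ x₁ x₂ → ‖x₁ 0‖ < r → ‖x₂ 0‖ < r →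
        Tendsto (fun t => (x₁ t, x₂ t)) atTop (nhds ((0 : Vec p), (0 : Vec p)))) := by
  rcases Nat.eq_zero_or_pos p with rfl | hp
  · -- degenerate case: the state space is trivial
    have hsub : ∀ v : Vec 0, v = 0 := fun v => Subsingleton.elim v 0
    constructor
    · intro ε hε
      refine ⟨1, one_pos, fun x₁ x₂ _ _ _ t _ => ?_⟩
      rw [hsub (x₁ t), hsub (x₂ t), norm_zero]
      exact ⟨hε, hε⟩
    · refine ⟨1, one_pos, fun x₁ x₂ _ _ _ => ?_⟩
      have : (fun t => ((x₁ t, x₂ t) : Vec 0 × Vec 0)) = fun _ => ((0 : Vec 0), (0 : Vec 0)) :=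
        funext fun t => by rw [hsub (x₁ t), hsub (x₂ t)]
      rw [this]
      exact tendsto_const_nhds
  -- non-degenerate case
  have hmono : ∀ x₁ x₂ : ℝ → Vec p, ClosedLoop f₁ h₁ f₂ h₂ x₁ x₂ →
      Antitone (fun t => V₁ (x₁ t) + V₂ (x₂ t) - ⟪h₁ (x₁ t), h₂ (x₂ t)⟫) := by
    intro x₁ x₂ hx
    refine antitone_of_deriv_nonpos
      (fun t => (W_hasDeriv hh₁ hh₂ hV₁c hV₂c hNI hOSNI hx t).1) (fun t => ?_)
    refine le_trans (W_hasDeriv hh₁ hh₂ hV₁c hV₂c hNI hOSNI hx t).2 ?_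
    have := mul_nonneg hδ.le (sq_nonneg ‖deriv (fun s => h₂ (x₂ s)) t‖)
    linarith
  have hstabmain := stab hp hh₁ hh₂ hV₁c hV₂c hW hmono
  constructor
  · -- Lyapunov stability
    intro ε hε
    obtain ⟨r, hr, hst⟩ := hstabmain ε hε
    refine ⟨r, hr, fun x₁ x₂ hx hx1 hx2 t ht => ?_⟩
    have h := hst x₁ x₂ hx hx1 hx2 t ht
    exact ⟨lt_of_le_of_lt (norm_fst_le ((x₁ t, x₂ t) : Vec p × Vec p)) h,
      lt_of_le_of_lt (norm_snd_le ((x₁ t, x₂ t) : Vec p × Vec p)) h⟩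
  · -- attractivity
    obtain ⟨r, hr, hst⟩ := hstabmain 1 one_pos
    refine ⟨r, hr, fun x₁ x₂ hx hx1 hx2 => ?_⟩
    have hWc : Continuous (fun z : Vec p × Vec p => V₁ z.1 + V₂ z.2 - ⟪h₁ z.1, h₂ z.2⟫) :=
      W_cont hh₁ hh₂ hV₁c hV₂c
    have hzK : ∀ t : ℝ, 0 ≤ t →
        ((x₁ t, x₂ t) : Vec p × Vec p) ∈ Metric.closedBall (0 : Vec p × Vec p) 1 := by
      intro t ht
      rw [Metric.mem_closedBall, dist_zero_right]
      exact (hst x₁ x₂ hx hx1 hx2 t ht).le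
    have hzT : ∀ t : ℝ, HasDerivAt (fun t => ((x₁ t, x₂ t) : Vec p × Vec p))
        ((fun z : Vec p × Vec p => ((f₁ z.1 (h₂ z.2), f₂ z.2 (h₁ z.1)) : Vec p × Vec p))
          ((x₁ t, x₂ t) : Vec p × Vec p)) t :=
      fun t => (hx.1 t).prodMk (hx.2 t)
    obtain ⟨C, hFC⟩ := F_lip hf₁ hf₂ hh₁ hh₂
    obtain ⟨w, hwT, hwK, φ, hφ, hwlim⟩ :=
      limit_traj hFC hzT hzK (isCompact_closedBall _ _)
    -- the Lyapunov function decreases along the trajectory to a limit L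
    have hanti := hmono x₁ x₂ hx
    have hbdd : BddBelow (Set.range fun t => V₁ (x₁ t) + V₂ (x₂ t) -
        ⟪h₁ (x₁ t), h₂ (x₂ t)⟫) := by
      refine ⟨0, fun y hy => ?_⟩
      obtain ⟨t, rfl⟩ := hy
      exact posdef_nonneg hW ((x₁ t, x₂ t) : Vec p × Vec p)
    have hL := tendsto_atTop_ciInf hanti hbdd
    set L : ℝ := ⨅ t : ℝ, (V₁ (x₁ t) + V₂ (x₂ t) - ⟪h₁ (x₁ t), h₂ (x₂ t)⟫) with hLdef
    -- along the limit trajectory w, the Lyapunov function is constantly L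
    have hWl : ∀ s : ℝ, V₁ ((w s).1) + V₂ ((w s).2) - ⟪h₁ ((w s).1), h₂ ((w s).2)⟫ = L := by
      intro s
      have h1 : Tendsto (fun k : ℕ => V₁ ((x₁ ((φ k : ℝ) + s), x₂ ((φ k : ℝ) + s)).1) +
          V₂ ((x₁ ((φ k : ℝ) + s), x₂ ((φ k : ℝ) + s)).2) -
          ⟪h₁ ((x₁ ((φ k : ℝ) + s), x₂ ((φ k : ℝ) + s)).1),
            h₂ ((x₁ ((φ k : ℝ) + s), x₂ ((φ k : ℝ) + s)).2)⟫) atTop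
          (𝓝 (V₁ ((w s).1) + V₂ ((w s).2) - ⟪h₁ ((w s).1), h₂ ((w s).2)⟫)) :=
        (hWc.tendsto (w s)).comp (hwlim s)
      have h2 : Tendsto (fun k : ℕ => ((φ k : ℝ) + s)) atTop atTop := by
        refine tendsto_atTop_mono (fun k => ?_)
          (tendsto_atTop_add_const_right _ s tendsto_natCast_atTop_atTop)
        exact add_le_add_left (Nat.cast_le.2 hφ.le_apply) s
      exact tendsto_nhds_unique h1 (hL.comp h2)
    -- w is itself a closed-loop trajectory
    have hwcl : ClosedLoop f₁ h₁ f₂ h₂ (fun s => (w s).1) (fun s => (w s).2) := by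
      constructor <;> intro s
      · exact ((ContinuousLinearMap.fst ℝ (Vec p) (Vec p)).hasFDerivAt).comp_hasDerivAt s (hwT s)
      · exact ((ContinuousLinearMap.snd ℝ (Vec p) (Vec p)).hasFDerivAt).comp_hasDerivAt s (hwT s)
    -- the output derivative of H₂ vanishes along w
    have hcf : (fun s => V₁ ((w s).1) + V₂ ((w s).2) - ⟪h₁ ((w s).1), h₂ ((w s).2)⟫) =
        fun _ : ℝ => L := funext fun s => hWl s
    have hzero : ∀ s : ℝ, deriv (fun u => h₂ ((w u).2)) s = 0 := by
      intro s
      have h0 := (W_hasDeriv hh₁ hh₂ hV₁c hV₂c hNI hOSNI hwcl s).2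
      have h1 : deriv (fun s => V₁ ((w s).1) + V₂ ((w s).2) -
          ⟪h₁ ((w s).1), h₂ ((w s).2)⟫) s = 0 := by
        rw [hcf]; exact deriv_const _ _
      rw [h1] at h0
      have h2 : ‖deriv (fun u => h₂ ((w u).2)) s‖ ^ 2 ≤ 0 := by nlinarith
      have h3 : ‖deriv (fun u => h₂ ((w u).2)) s‖ ^ 2 = 0 := le_antisymm h2 (sq_nonneg _)
      exact norm_eq_zero.1 ((pow_eq_zero_iff two_ne_zero).1 h3)
    have hy₂diff : Differentiable ℝ (fun u => h₂ ((w u).2)) := fun u =>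
      DifferentiableAt.comp u (hh₂.differentiable one_ne_zero _) (hwT u).differentiableAt.snd
    have hy₂const : ∀ a b : ℝ, h₂ ((w a).2) = h₂ ((w b).2) :=
      is_const_of_deriv_eq_zero hy₂diff hzero
    -- the LaSalle chain of implications
    have c1 : ∀ s ∈ Set.Icc (0:ℝ) 1, ∀ s' ∈ Set.Icc (0:ℝ) 1, (w s).2 = (w s').2 :=
      (hAI₂ (fun s => (w s).2) (fun s => h₁ ((w s).1)) hwcl.2 0 1 zero_lt_one).1.mpr
        (fun s _ s' _ => hy₂const s s')
    have c2 : ∀ s ∈ Set.Icc (0:ℝ) 1, ∀ s' ∈ Set.Icc (0:ℝ) 1,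
        h₁ ((w s).1) = h₁ ((w s').1) :=
      (hAII₂ (fun s => (w s).2) (fun s => h₁ ((w s).1)) hwcl.2 0 1 zero_lt_one).1 c1
    have c3 : ∀ s ∈ Set.Icc (0:ℝ) 1, ∀ s' ∈ Set.Icc (0:ℝ) 1, (w s).1 = (w s').1 :=
      (hAI₁ (fun s => (w s).1) (fun s => h₂ ((w s).2)) hwcl.1 0 1 zero_lt_one).1.mpr c2
    have hAIII' := hAIII (fun s => (w s).1) (fun s => h₂ ((w s).2)) (fun s => (w s).2)
      (h₂ ((w 0).2)) (h₂ ((w 0).2)) 0 1 zero_lt_one hwcl.1 hwcl.2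
      (fun s _ => hy₂const s 0) (fun s _ => hy₂const s 0)
    have hy0 : h₂ ((w 0).2) = 0 := by
      rw [real_inner_self_eq_norm_sq] at hAIII'
      have h2 : ‖h₂ ((w 0).2)‖ ^ 2 ≤ 0 := by nlinarith
      have h3 : ‖h₂ ((w 0).2)‖ ^ 2 = 0 := le_antisymm h2 (sq_nonneg _)
      exact norm_eq_zero.1 ((pow_eq_zero_iff two_ne_zero).1 h3)
    have c4 : ∀ s ∈ Set.Icc (0:ℝ) 1, (w s).2 = 0 :=
      (hAI₂ (fun s => (w s).2) (fun s => h₁ ((w s).1)) hwcl.2 0 1 zero_lt_one).2.mpr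
        (fun s _ => (hy₂const s 0).trans hy0)
    have c5 : ∀ s ∈ Set.Icc (0:ℝ) 1, h₁ ((w s).1) = 0 :=
      (hAII₂ (fun s => (w s).2) (fun s => h₁ ((w s).1)) hwcl.2 0 1 zero_lt_one).2 c4
    have c6 : ∀ s ∈ Set.Icc (0:ℝ) 1, (w s).1 = 0 :=
      (hAI₁ (fun s => (w s).1) (fun s => h₂ ((w s).2)) hwcl.1 0 1 zero_lt_one).2.mpr c5
    have hw0 : w 0 = (0 : Vec p × Vec p) := by
      have e1 : (w 0).1 = 0 := c6 0 ⟨le_rfl, zero_le_one⟩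
      have e2 : (w 0).2 = 0 := c4 0 ⟨le_rfl, zero_le_one⟩
      exact Prod.ext e1 e2
    -- hence L = 0
    have hL0 : L = 0 := by
      have h := hWl 0
      rw [hw0] at h
      have h0 : V₁ ((0 : Vec p × Vec p).1) + V₂ ((0 : Vec p × Vec p).2) -
          ⟪h₁ ((0 : Vec p × Vec p).1), h₂ ((0 : Vec p × Vec p).2)⟫ = 0 := hW.1
      rw [h0] at h
      exact h.symm
    rw [hL0] at hL
    -- conclude convergence to the origin
    rw [show ((0 : Vec p), (0 : Vec p)) = (0 : Vec p × Vec p) from rfl]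
    refine Metric.tendsto_nhds.2 (fun ε hε => ?_)
    have hAc : IsCompact ((Metric.closedBall (0 : Vec p × Vec p) 1) \
        (Metric.ball (0 : Vec p × Vec p) ε)) :=
      (isCompact_closedBall _ _).diff Metric.isOpen_ball
    by_cases hA : ((Metric.closedBall (0 : Vec p × Vec p) 1) \
        (Metric.ball (0 : Vec p × Vec p) ε)).Nonempty
    · obtain ⟨z₀, hz₀, hminA⟩ := hAc.exists_isMinOn hA hWc.continuousOn
      have hz₀ne : z₀ ≠ 0 := by
        intro h
        exact hz₀.2 (h ▸ Metric.mem_ball_self hε)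
      have hm : 0 < V₁ z₀.1 + V₂ z₀.2 - ⟪h₁ z₀.1, h₂ z₀.2⟫ := hW.2 _ hz₀ne
      have hev := hL.eventually (gt_mem_nhds hm)
      filter_upwards [hev, eventually_ge_atTop (0:ℝ)] with t h1 h2
      by_contra hcon
      have hmemA : ((x₁ t, x₂ t) : Vec p × Vec p) ∈
          (Metric.closedBall (0 : Vec p × Vec p) 1) \ (Metric.ball (0 : Vec p × Vec p) ε) :=
        ⟨hzK t h2, fun hb => hcon (Metric.mem_ball.1 hb)⟩
      exact absurd h1 (not_lt.2 (isMinOn_iff.1 hminA _ hmemA))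
    · filter_upwards [eventually_ge_atTop (0:ℝ)] with t h2
      by_contra hcon
      exact hA ⟨((x₁ t, x₂ t) : Vec p × Vec p),
        hzK t h2, fun hb => hcon (Metric.mem_ball.1 hb)⟩
end
end

section
/- Along any trajectory of the positive feedback interconnection (u₁ = y₂, u₂ = y₁) of a nonlinear NI system H₁ with storage function V₁ and a nonlinear OSNI system H₂ with storage function V₂ and output strictness δ > 0, the function W(x₁,x₂) = V₁(x₁) + V₂(x₂) − h₁(x₁)ᵀh₂(x₂) satisfies d/dt W(x₁(t),x₂(t)) ≤ −δ|ẏ₂(t)|² ≤ 0 for all t ≥ 0. -/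
noncomputable section

open scoped RealInnerProductSpace
open Filter

/-- Along any trajectory of the positive feedback interconnection
(u₁ = y₂, u₂ = y₁) of a nonlinear NI system H₁ (storage V₁) and a nonlinear OSNI system
H₂ (storage V₂, output strictness δ > 0), the function
W(x₁,x₂) = V₁(x₁) + V₂(x₂) − h₁(x₁)ᵀh₂(x₂) satisfies
d/dt W(x₁(t),x₂(t)) ≤ −δ|ẏ₂(t)|² ≤ 0 for all t ≥ 0. -/
theorem stmt1 {p m : ℕ}
    (f₁ f₂ : Vec p → Vec m → Vec p) (h₁ h₂ : Vec p → Vec m)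
    (K₁ K₂ : NNReal)
    (hf₁ : LipschitzWith K₁ (Function.uncurry f₁))
    (hf₂ : LipschitzWith K₂ (Function.uncurry f₂))
    (hh₁ : ContDiff ℝ 1 h₁) (hh₂ : ContDiff ℝ 1 h₂)
    (V₁ V₂ : Vec p → ℝ)
    (hV₁c : ContDiff ℝ 1 V₁) (hV₂c : ContDiff ℝ 1 V₂)
    (hV₁pd : PosDefFn V₁) (hV₂pd : PosDefFn V₂)
    (δ : ℝ) (hδ : 0 < δ)
    (hNI : NIStorage f₁ h₁ V₁)
    (hOSNI : OSNIStorage f₂ h₂ V₂ δ)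
    (x₁ x₂ : ℝ → Vec p)
    (hcl : ClosedLoop f₁ h₁ f₂ h₂ x₁ x₂) :
    ∀ t ≥ (0 : ℝ),
      deriv (fun s => V₁ (x₁ s) + V₂ (x₂ s) - ⟪h₁ (x₁ s), h₂ (x₂ s)⟫) t ≤
          -δ * ‖deriv (fun s => h₂ (x₂ s)) t‖ ^ 2 ∧
      -δ * ‖deriv (fun s => h₂ (x₂ s)) t‖ ^ 2 ≤ 0 := by
  intro t _
  have hx₁ := hcl.1 t
  have hx₂ := hcl.2 t
  -- derivatives of outputs
  have hy₁ : HasDerivAt (fun s => h₁ (x₁ s))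
      (fderiv ℝ h₁ (x₁ t) (f₁ (x₁ t) (h₂ (x₂ t)))) t :=
    ((hh₁.differentiable one_ne_zero (x₁ t)).hasFDerivAt).comp_hasDerivAt t hx₁
  have hy₂ : HasDerivAt (fun s => h₂ (x₂ s))
      (fderiv ℝ h₂ (x₂ t) (f₂ (x₂ t) (h₁ (x₁ t)))) t :=
    ((hh₂.differentiable one_ne_zero (x₂ t)).hasFDerivAt).comp_hasDerivAt t hx₂
  have hV₁d : HasDerivAt (fun s => V₁ (x₁ s))
      (fderiv ℝ V₁ (x₁ t) (f₁ (x₁ t) (h₂ (x₂ t)))) t :=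
    ((hV₁c.differentiable one_ne_zero (x₁ t)).hasFDerivAt).comp_hasDerivAt t hx₁
  have hV₂d : HasDerivAt (fun s => V₂ (x₂ s))
      (fderiv ℝ V₂ (x₂ t) (f₂ (x₂ t) (h₁ (x₁ t)))) t :=
    ((hV₂c.differentiable one_ne_zero (x₂ t)).hasFDerivAt).comp_hasDerivAt t hx₂
  set a₁ := fderiv ℝ h₁ (x₁ t) (f₁ (x₁ t) (h₂ (x₂ t)))
  set a₂ := fderiv ℝ h₂ (x₂ t) (f₂ (x₂ t) (h₁ (x₁ t)))
  have hinner : HasDerivAt (fun s => ⟪h₁ (x₁ s), h₂ (x₂ s)⟫)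
      (⟪h₁ (x₁ t), a₂⟫ + ⟪a₁, h₂ (x₂ t)⟫) t := hy₁.inner ℝ hy₂
  have hW : HasDerivAt (fun s => V₁ (x₁ s) + V₂ (x₂ s) - ⟪h₁ (x₁ s), h₂ (x₂ s)⟫)
      (fderiv ℝ V₁ (x₁ t) (f₁ (x₁ t) (h₂ (x₂ t))) +
        fderiv ℝ V₂ (x₂ t) (f₂ (x₂ t) (h₁ (x₁ t))) -
        (⟪h₁ (x₁ t), a₂⟫ + ⟪a₁, h₂ (x₂ t)⟫)) t :=
    (hV₁d.add hV₂d).sub hinner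
  have e₁ : deriv (fun s => h₁ (x₁ s)) t = a₁ := hy₁.deriv
  have e₂ : deriv (fun s => h₂ (x₂ s)) t = a₂ := hy₂.deriv
  have hNI' := hNI x₁ (fun s => h₂ (x₂ s)) hcl.1 t
  have hOS' := hOSNI x₂ (fun s => h₁ (x₁ s)) hcl.2 t
  rw [e₁, hV₁d.deriv] at hNI'
  rw [e₂, hV₂d.deriv] at hOS'
  constructor
  · rw [hW.deriv, e₂]
    have hsym : ⟪h₂ (x₂ t), a₁⟫ = ⟪a₁, h₂ (x₂ t)⟫ := real_inner_comm _ _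
    nlinarith [hNI', hOS']
  · have : (0:ℝ) ≤ δ * ‖deriv (fun s => h₂ (x₂ s)) t‖ ^ 2 := by positivity
    linarith
end
end

section
/- Consider the positive feedback interconnection (u₁ = y₂, u₂ = y₁) of systems H₁ and H₂ satisfying Assumptions I, II and III with constant γ ∈ (0,1). If along a closed-loop trajectory the derivative of the output of H₂ vanishes identically, ẏ₂(t) ≡ 0 over a nondegenerate time interval, then on that interval x₁(t) ≡ 0 and x₂(t) ≡ 0 (and hence u₁ ≡ u₂ ≡ y₁ ≡ y₂ ≡ 0). -/
noncomputable section

open scoped RealInnerProductSpace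
open Filter

/-- In the positive feedback interconnection (u₁ = y₂, u₂ = y₁) of H₁
and H₂ satisfying Assumptions I, II and III (with constant γ ∈ (0,1)), if the derivative
of the output of H₂ vanishes identically on a nondegenerate time interval, then on that
interval x₁ ≡ 0 and x₂ ≡ 0 (and hence u₁ ≡ u₂ ≡ y₁ ≡ y₂ ≡ 0). -/
theorem stmt2 {p m : ℕ}
    (f₁ f₂ : Vec p → Vec m → Vec p) (h₁ h₂ : Vec p → Vec m)
    (K₁ K₂ : NNReal)
    (hf₁ : LipschitzWith K₁ (Function.uncurry f₁))
    (hf₂ : LipschitzWith K₂ (Function.uncurry f₂))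
    (hh₁ : ContDiff ℝ 1 h₁) (hh₂ : ContDiff ℝ 1 h₂)
    (hAI₁ : AssumptionI f₁ h₁) (hAI₂ : AssumptionI f₂ h₂)
    (hAII₁ : AssumptionII f₁ h₁) (hAII₂ : AssumptionII f₂ h₂)
    (γ : ℝ) (hγ0 : 0 < γ) (hγ1 : γ < 1)
    (hAIII : AssumptionIII f₁ h₁ f₂ h₂ γ)
    (x₁ x₂ : ℝ → Vec p)
    (hcl : ClosedLoop f₁ h₁ f₂ h₂ x₁ x₂)
    (ta tb : ℝ) (htatb : ta < tb)
    (hy₂dot : ∀ t ∈ Set.Icc ta tb, deriv (fun s => h₂ (x₂ s)) t = 0) :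
    ∀ t ∈ Set.Icc ta tb,
      x₁ t = 0 ∧ x₂ t = 0 ∧ h₁ (x₁ t) = 0 ∧ h₂ (x₂ t) = 0 := by
  have hy₂d : ∀ t : ℝ, DifferentiableAt ℝ (fun s => h₂ (x₂ s)) t := fun t =>
    ((hh₂.differentiable one_ne_zero (x₂ t)).hasFDerivAt.comp_hasDerivAt t (hcl.2 t)).differentiableAt
  have hconst : ∀ s ∈ Set.Icc ta tb, h₂ (x₂ s) = h₂ (x₂ ta) := by
    apply constant_of_has_deriv_right_zero
    · exact fun s _ => (hy₂d s).continuousAt.continuousWithinAt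
    · intro s hs
      have hd := (hy₂d s).hasDerivAt
      rw [hy₂dot s (Set.Ico_subset_Icc_self hs)] at hd
      exact hd.hasDerivWithinAt
  set U : Vec m := h₂ (x₂ ta) with hUdef
  have h3 := hAIII x₁ (fun t => h₂ (x₂ t)) x₂ U U ta tb htatb hcl.1 hcl.2 hconst hconst
  rw [real_inner_self_eq_norm_sq] at h3
  have hU0 : U = 0 := by
    by_contra hne
    have hn : ‖U‖ ≠ 0 := norm_ne_zero_iff.mpr hne
    have : 0 < ‖U‖ ^ 2 := by positivity
    nlinarith
  have hy₂0 : ∀ s ∈ Set.Icc ta tb, h₂ (x₂ s) = 0 := fun s hs => by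
    rw [hconst s hs, hU0]
  have hx₂0 := ((hAI₂ x₂ _ hcl.2 ta tb htatb).2).mpr hy₂0
  have hy₁0 := ((hAII₂ x₂ _ hcl.2 ta tb htatb).2) hx₂0
  have hx₁0 := ((hAI₁ x₁ _ hcl.1 ta tb htatb).2).mpr hy₁0
  exact fun t ht => ⟨hx₁0 t ht, hx₂0 t ht, hy₁0 t ht, hy₂0 t ht⟩
end
end

section
/- Let (A,B,C) with A ∈ ℝ^{q×q}, B ∈ ℝ^{q×m}, C ∈ ℝ^{m×q} be a state-space realization of a linear system ẋ = Ax + Bu, y = Cx which is OSNI with output strictness δ > 0 in the dissipativity sense: there is a positive definite C¹ storage function V₂ : ℝ^q → ℝ such that d/dt V₂(x(t)) ≤ u(t)ᵀẏ(t) − δ|ẏ(t)|² along every trajectory. Consider two identical copies with states x₁, x₂, inputs u₁, u₂, outputs y₁ = Cx₁, y₂ = Cx₂, and form the network with Laplacian L₂ = [[1,−1],[−1,1]] (transfer function L₂ ⊗ M(s)), whose input is ũ = (u₁,u₂) and whose output is ỹ = (y₁ − y₂, y₂ − y₁). Then the function Ṽ(x₁,x₂) := V₂(x₁ − x₂) satisfies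 d/dt Ṽ ≤ ũᵀ(dỹ/dt) − (δ/2)|dỹ/dt|² along every trajectory of the two copies; i.e., the two-node networked system is OSNI with output strictness δ/2. -/
noncomputable section

open scoped RealInnerProductSpace
open Filter

/-- If the linear system (A,B,C) is OSNI with output strictness δ > 0
(dissipativity sense, storage V₂), then the two-node network L₂ ⊗ M(s), with input
ũ = (u₁,u₂) and output ỹ = (y₁ − y₂, y₂ − y₁), admits Ṽ(x₁,x₂) = V₂(x₁ − x₂) as a
storage function satisfying d/dt Ṽ ≤ ũᵀ(dỹ/dt) − (δ/2)|dỹ/dt|² along every trajectory;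
i.e., the two-node networked system is OSNI with output strictness δ/2.  (The inner
product ũᵀ(dỹ/dt) and squared norm |dỹ/dt|² of the stacked vectors are written out
blockwise.) -/
theorem stmt3 {q m : ℕ}
    (A : Matrix (Fin q) (Fin q) ℝ) (B : Matrix (Fin q) (Fin m) ℝ)
    (C : Matrix (Fin m) (Fin q) ℝ)
    (V₂ : Vec q → ℝ) (δ : ℝ) (hδ : 0 < δ)
    (hpd : PosDefFn V₂) (hC1 : ContDiff ℝ 1 V₂)
    (hOSNI : OSNIStorage (linF A B) (linH C) V₂ δ)
    (x₁ x₂ : ℝ → Vec q) (u₁ u₂ : ℝ → Vec m)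
    (hx₁ : IsTrajectory (linF A B) x₁ u₁)
    (hx₂ : IsTrajectory (linF A B) x₂ u₂) :
    ∀ t : ℝ,
      deriv (fun s => V₂ (x₁ s - x₂ s)) t ≤
        (⟪u₁ t, deriv (fun s => linH C (x₁ s) - linH C (x₂ s)) t⟫ +
          ⟪u₂ t, deriv (fun s => linH C (x₂ s) - linH C (x₁ s)) t⟫) -
        (δ / 2) * (‖deriv (fun s => linH C (x₁ s) - linH C (x₂ s)) t‖ ^ 2 +
          ‖deriv (fun s => linH C (x₂ s) - linH C (x₁ s)) t‖ ^ 2) := by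
  intro t
  have htraj : IsTrajectory (linF A B) (fun s => x₁ s - x₂ s) (fun s => u₁ s - u₂ s) := by
    intro t
    have h := (hx₁ t).fun_sub (hx₂ t)
    refine h.congr_deriv ?_
    simp [linF, map_sub]
    abel
  have key := hOSNI _ _ htraj t
  have heq : (fun s => linH C (x₁ s - x₂ s)) = fun s => linH C (x₁ s) - linH C (x₂ s) := by
    funext s; simp [linH, map_sub]
  rw [heq] at key
  have hneg : (fun s => linH C (x₂ s) - linH C (x₁ s)) =
      fun s => -(linH C (x₁ s) - linH C (x₂ s)) := by
    funext s; abel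
  rw [hneg, deriv.fun_neg]
  set D := deriv (fun s => linH C (x₁ s) - linH C (x₂ s)) t
  have : ⟪u₁ t - u₂ t, D⟫ = ⟪u₁ t, D⟫ - ⟪u₂ t, D⟫ := inner_sub_left _ _ _
  rw [this] at key
  simp only [inner_neg_right, norm_neg]
  linarith
end
end

section
/- Let (A,B,C) be a realization of a linear OSNI system with output strictness δ > 0 in the dissipativity sense, with positive definite C¹ storage function V₂. Consider n identical copies ẋᵢ = Axᵢ + Buᵢ, yᵢ = Cxᵢ (i = 1,…,n) connected according to an undirected graph with adjacency matrix a = [a_{ij}] (symmetric, zero diagonal, entries in {0,1}), so that the networked system (transfer function 𝓛ₙ ⊗ M(s)) has stacked input U₂ = (u₁,…,uₙ) and stacked output Y₂ whose i-th block is (Y₂)ᵢ = Σⱼ a_{ij}(yᵢ − yⱼ). Then the function V̂₂(x₁,…,xₙ) := (1/2) Σᵢ Σⱼ a_{ij} V₂(xᵢ − xⱼ) satisfies, along every trajectory, d/dt V̂₂ ≤ U₂ᵀ(dY₂/dt) − (δ/2) Σᵢ Σⱼ a_{ij} |ẏᵢ − ẏⱼ|² (the OSNI-like property of the networked linear OSNI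 system). -/
noncomputable section

open scoped RealInnerProductSpace
open Filter

/-- Let (A,B,C) be a realization of a linear OSNI system with output
strictness δ > 0 (dissipativity sense, storage V₂), and consider n identical copies
connected according to an undirected graph with {0,1} adjacency matrix a, so that the
networked system 𝓛ₙ ⊗ M(s) has stacked input U₂ = (u₁,…,uₙ) and stacked output with
i-th block (Y₂)ᵢ = Σⱼ a_{ij}(yᵢ − yⱼ).  Then
V̂₂(x₁,…,xₙ) = (1/2) Σᵢ Σⱼ a_{ij} V₂(xᵢ − xⱼ) satisfies, along every trajectory,
d/dt V̂₂ ≤ U₂ᵀ(dY₂/dt) − (δ/2) Σᵢ Σⱼ a_{ij} |ẏᵢ − ẏⱼ|². -/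
theorem stmt6 {q m n : ℕ}
    (A : Matrix (Fin q) (Fin q) ℝ) (B : Matrix (Fin q) (Fin m) ℝ)
    (C : Matrix (Fin m) (Fin q) ℝ)
    (V₂ : Vec q → ℝ) (δ : ℝ) (hδ : 0 < δ)
    (hpd : PosDefFn V₂) (hC1 : ContDiff ℝ 1 V₂)
    (hOSNI : OSNIStorage (linF A B) (linH C) V₂ δ)
    (a : Fin n → Fin n → ℝ)
    (hsymm : ∀ i j, a i j = a j i) (hdiag : ∀ i, a i i = 0)
    (h01 : ∀ i j, a i j = 0 ∨ a i j = 1)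
    (x : Fin n → ℝ → Vec q) (u : Fin n → ℝ → Vec m)
    (htraj : ∀ i, IsTrajectory (linF A B) (x i) (u i)) :
    ∀ t : ℝ,
      deriv (fun s => (1 / 2) * ∑ i, ∑ j, a i j * V₂ (x i s - x j s)) t ≤
        (∑ i, ⟪u i t,
            deriv (fun s => ∑ j, a i j • (linH C (x i s) - linH C (x j s))) t⟫) -
        (δ / 2) * ∑ i, ∑ j, a i j *
          ‖deriv (fun s => linH C (x i s)) t - deriv (fun s => linH C (x j s)) t‖ ^ 2 := by
  intro t
  classical
  have hVdiff : Differentiable ℝ V₂ := hC1.differentiable one_ne_zero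
  have hx : ∀ i, HasDerivAt (x i) (linF A B (x i t) (u i t)) t := fun i => htraj i t
  set y' : Fin n → Vec m := fun i => linH C (linF A B (x i t) (u i t)) with hy'
  have hy : ∀ i, HasDerivAt (fun s => linH C (x i s)) (y' i) t := by
    intro i
    have hL : HasFDerivAt (linH C)
        (LinearMap.toContinuousLinearMap (Matrix.toEuclideanLin C)) (x i t) := by
      exact
        (LinearMap.toContinuousLinearMap (Matrix.toEuclideanLin C)).hasFDerivAt
    exact hL.comp_hasDerivAt t (hx i)
  have hyd : ∀ i, deriv (fun s => linH C (x i s)) t = y' i := fun i => (hy i).deriv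
  have hpair : ∀ i j, IsTrajectory (linF A B)
      (fun s => x i s - x j s) (fun s => u i s - u j s) := by
    intro i j s
    have h : HasDerivAt (fun s => x i s - x j s)
        (linF A B (x i s) (u i s) - linF A B (x j s) (u j s)) s :=
      (htraj i s).fun_sub (htraj j s)
    convert h using 1
    simp only [linF, map_sub]
    abel
  have hkey : ∀ i j, deriv (fun s => V₂ (x i s - x j s)) t ≤
      ⟪u i t - u j t, y' i - y' j⟫ - δ * ‖y' i - y' j‖ ^ 2 := by
    intro i j
    have h := hOSNI _ _ (hpair i j) t
    have hd : deriv (fun s => linH C (x i s - x j s)) t = y' i - y' j := by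
      have h2 : (fun s => linH C (x i s - x j s))
          = fun s => linH C (x i s) - linH C (x j s) := by
        funext s; simp [linH, map_sub]
      rw [h2]; exact ((hy i).sub (hy j)).deriv
    rw [hd] at h
    exact h
  have hgd : ∀ i j, HasDerivAt (fun s => V₂ (x i s - x j s))
      (deriv (fun s => V₂ (x i s - x j s)) t) t := by
    intro i j
    have hd : DifferentiableAt ℝ (fun s => V₂ (x i s - x j s)) t :=
      (hVdiff (x i t - x j t)).comp t ((hx i).sub (hx j)).differentiableAt
    exact hd.hasDerivAt
  -- LHS derivative
  have hLHS : deriv (fun s => (1 / 2) * ∑ i, ∑ j, a i j * V₂ (x i s - x j s)) t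
      = (1 / 2) * ∑ i, ∑ j, a i j * deriv (fun s => V₂ (x i s - x j s)) t := by
    have H : HasDerivAt (fun s => (1 / 2 : ℝ) * ∑ i, ∑ j, a i j * V₂ (x i s - x j s))
        ((1 / 2) * ∑ i, ∑ j, a i j * deriv (fun s => V₂ (x i s - x j s)) t) t := by
      refine HasDerivAt.const_mul _ ?_
      refine HasDerivAt.fun_sum fun i _ => ?_
      refine HasDerivAt.fun_sum fun j _ => ?_
      exact (hgd i j).const_mul _
    exact H.deriv
  -- derivative of stacked output blocks
  have hYd : ∀ i, deriv (fun s => ∑ j, a i j • (linH C (x i s) - linH C (x j s))) t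
      = ∑ j, a i j • (y' i - y' j) := by
    intro i
    have H : HasDerivAt (fun s => ∑ j, a i j • (linH C (x i s) - linH C (x j s)))
        (∑ j, a i j • (y' i - y' j)) t := by
      refine HasDerivAt.fun_sum fun j _ => ?_
      exact ((hy i).fun_sub (hy j)).fun_const_smul _
    exact H.deriv
  have ha : ∀ i j, 0 ≤ a i j := by
    intro i j; rcases h01 i j with h | h <;> rw [h] <;> norm_num
  rw [hLHS]
  simp only [hYd, hyd]
  -- key summed inequality
  have hsum : ∑ i, ∑ j, a i j * deriv (fun s => V₂ (x i s - x j s)) t ≤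
      ∑ i, ∑ j, a i j * (⟪u i t - u j t, y' i - y' j⟫ - δ * ‖y' i - y' j‖ ^ 2) := by
    refine Finset.sum_le_sum fun i _ => Finset.sum_le_sum fun j _ => ?_
    exact mul_le_mul_of_nonneg_left (hkey i j) (ha i j)
  -- rearrange cross term
  have hT : ∑ i, ∑ j, a i j * ⟪u i t - u j t, y' i - y' j⟫
      = 2 * ∑ i, ⟪u i t, ∑ j, a i j • (y' i - y' j)⟫ := by
    have h1 : ∀ i j, ⟪u i t - u j t, y' i - y' j⟫
        = ⟪u i t, y' i - y' j⟫ - ⟪u j t, y' i - y' j⟫ := by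
      intro i j; rw [inner_sub_left]
    have h2 : ∑ i, ∑ j, a i j * ⟪u j t, y' i - y' j⟫
        = - ∑ i, ∑ j, a i j * ⟪u i t, y' i - y' j⟫ := by
      rw [Finset.sum_comm]
      rw [← Finset.sum_neg_distrib]
      refine Finset.sum_congr rfl fun j _ => ?_
      rw [← Finset.sum_neg_distrib]
      refine Finset.sum_congr rfl fun i _ => ?_
      rw [hsymm i j]
      have : (⟪u j t, y' i - y' j⟫ : ℝ) = - ⟪u j t, y' j - y' i⟫ := by
        rw [← inner_neg_right]; congr 1; abel
      rw [this]; ring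
    have h3 : ∀ i, (⟪u i t, ∑ j, a i j • (y' i - y' j)⟫ : ℝ)
        = ∑ j, a i j * ⟪u i t, y' i - y' j⟫ := by
      intro i
      rw [inner_sum]
      exact Finset.sum_congr rfl fun j _ => real_inner_smul_right _ _ _
    simp only [h1, mul_sub, Finset.sum_sub_distrib, h2, h3]
    ring
  have hN : ∑ i, ∑ j, a i j * (⟪u i t - u j t, y' i - y' j⟫ - δ * ‖y' i - y' j‖ ^ 2)
      = (∑ i, ∑ j, a i j * ⟪u i t - u j t, y' i - y' j⟫)
        - δ * ∑ i, ∑ j, a i j * ‖y' i - y' j‖ ^ 2 := by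
    simp only [mul_sub, Finset.sum_sub_distrib]
    congr 1
    rw [Finset.mul_sum]
    refine Finset.sum_congr rfl fun i _ => ?_
    rw [Finset.mul_sum]
    exact Finset.sum_congr rfl fun j _ => by ring
  rw [hN, hT] at hsum
  linarith
end
end

section
/- Along any trajectory of the closed-loop interconnection of n identical nonlinear NI plants H₁ (storage V₁) with the networked linear OSNI controller 𝓛ₙ ⊗ M(s) (controller realization (A,B,C), storage V₂, output strictness δ > 0), with U₂ = Y₁ and U₁ = Y₂, the function Ŵ := V̂₁ + V̂₂ − Y₁ᵀY₂, where V̂₁ = Σᵢ V₁(xᵢ) and V̂₂ = (1/2) Σᵢ Σⱼ a_{ij} V₂(xᶜᵢ − xᶜⱼ), satisfies d/dt Ŵ ≤ −(δ/2) Σᵢ Σⱼ a_{ij} |ẏᶜᵢ − ẏᶜⱼ|² ≤ 0, where yᶜᵢ = Cxᶜᵢ are the individual controller outputs. -/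
noncomputable section

open scoped RealInnerProductSpace
open Filter

/-- A real square matrix is Hurwitz if every eigenvalue of it (viewed as a complex
matrix) has negative real part. -/
def IsHurwitz {q : ℕ} (A : Matrix (Fin q) (Fin q) ℝ) : Prop :=
  ∀ μ ∈ spectrum ℂ (A.map (algebraMap ℝ ℂ)), μ.re < 0

/-- Controllability of the pair (A, B). -/
def Controllable {q m : ℕ} (A : Matrix (Fin q) (Fin q) ℝ)
    (B : Matrix (Fin q) (Fin m) ℝ) : Prop :=
  Submodule.span ℝ {v : Fin q → ℝ | ∃ (k : ℕ) (w : Fin m → ℝ),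
    v = (A ^ k * B).mulVec w} = ⊤

/-- Observability of the pair (A, C). -/
def Observable {q m : ℕ} (A : Matrix (Fin q) (Fin q) ℝ)
    (C : Matrix (Fin m) (Fin q) ℝ) : Prop :=
  ∀ v : Fin q → ℝ, (∀ k : ℕ, (C * A ^ k).mulVec v = 0) → v = 0

/-- The undirected graph with adjacency matrix a is connected: every pair of nodes is
joined by a path of edges. -/
def AdjConnected {n : ℕ} (a : Fin n → Fin n → ℝ) : Prop :=
  ∀ i j : Fin n, Relation.ReflTransGen (fun k l => a k l = 1) i j

/-- The i-th block of the output of the networked controller 𝓛ₙ ⊗ M(s):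
(Y₂)ᵢ = Σⱼ a_{ij}(yᶜᵢ − yᶜⱼ) where yᶜᵢ = C xᶜᵢ. -/
def netOut {q m n : ℕ} (C : Matrix (Fin m) (Fin q) ℝ) (a : Fin n → Fin n → ℝ)
    (xc : Fin n → ℝ → Vec q) (i : Fin n) (t : ℝ) : Vec m :=
  ∑ j, a i j • (linH C (xc i t) - linH C (xc j t))

/-- The closed-loop interconnection of the n identical plants (f, h) with the networked
controller 𝓛ₙ ⊗ M(s): the controller inputs are the plant outputs, u₂ᵢ = yᵢ, and the
plant inputs are the blocks of the networked controller output, u₁ᵢ = (Y₂)ᵢ. -/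
def NetClosedLoop {p q m n : ℕ} (f : Vec p → Vec m → Vec p) (h : Vec p → Vec m)
    (A : Matrix (Fin q) (Fin q) ℝ) (B : Matrix (Fin q) (Fin m) ℝ)
    (C : Matrix (Fin m) (Fin q) ℝ) (a : Fin n → Fin n → ℝ)
    (xp : Fin n → ℝ → Vec p) (xc : Fin n → ℝ → Vec q) : Prop :=
  (∀ i, IsTrajectory f (xp i) (fun t => netOut C a xc i t)) ∧
  (∀ i, IsTrajectory (linF A B) (xc i) (fun t => h (xp i t)))

/-- Assumption IV for the open-loop interconnection of the parallel plant network 𝓗₁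
followed by the controller network 𝓛ₙ ⊗ M(s): with constant plant input U₁ ≡ Ū₁, plant
outputs fed to the controller network, and constant controller-network output Y₂ ≡ Ȳ₂,
one has Ū₁ᵀȲ₂ ≤ γ |Ū₁|². -/
def AssumptionIV {p q m n : ℕ} (f : Vec p → Vec m → Vec p) (h : Vec p → Vec m)
    (A : Matrix (Fin q) (Fin q) ℝ) (B : Matrix (Fin q) (Fin m) ℝ)
    (C : Matrix (Fin m) (Fin q) ℝ) (a : Fin n → Fin n → ℝ) (γ : ℝ) : Prop :=
  ∀ (xp : Fin n → ℝ → Vec p) (u₁ : Fin n → ℝ → Vec m) (xc : Fin n → ℝ → Vec q)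
    (U₁bar Y₂bar : Fin n → Vec m) (ta tb : ℝ), ta < tb →
    (∀ i, IsTrajectory f (xp i) (u₁ i)) →
    (∀ i, IsTrajectory (linF A B) (xc i) (fun t => h (xp i t))) →
    (∀ i, ∀ t ∈ Set.Icc ta tb, u₁ i t = U₁bar i) →
    (∀ i, ∀ t ∈ Set.Icc ta tb, netOut C a xc i t = Y₂bar i) →
    ∑ i, ⟪U₁bar i, Y₂bar i⟫ ≤ γ * ∑ i, ‖U₁bar i‖ ^ 2

/-- Along any trajectory of the closed-loop interconnection of n
identical nonlinear NI plants H₁ = (f, h) (storage V₁) with the networked linear OSNI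
controller 𝓛ₙ ⊗ M(s) (realization (A,B,C), storage V₂, output strictness δ > 0), the
function Ŵ = V̂₁ + V̂₂ − Y₁ᵀY₂, with V̂₁ = Σᵢ V₁(xᵢ) and
V̂₂ = (1/2) Σᵢ Σⱼ a_{ij} V₂(xᶜᵢ − xᶜⱼ), satisfies
d/dt Ŵ ≤ −(δ/2) Σᵢ Σⱼ a_{ij} |ẏᶜᵢ − ẏᶜⱼ|² ≤ 0. -/
theorem stmt8 {p q m n : ℕ}
    (f : Vec p → Vec m → Vec p) (h : Vec p → Vec m)
    (K : NNReal) (hf : LipschitzWith K (Function.uncurry f)) (hh : ContDiff ℝ 1 h)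
    (V₁ : Vec p → ℝ) (hV₁pd : PosDefFn V₁) (hV₁c : ContDiff ℝ 1 V₁)
    (hNI : NIStorage f h V₁)
    (A : Matrix (Fin q) (Fin q) ℝ) (B : Matrix (Fin q) (Fin m) ℝ)
    (C : Matrix (Fin m) (Fin q) ℝ)
    (V₂ : Vec q → ℝ) (hV₂pd : PosDefFn V₂) (hV₂c : ContDiff ℝ 1 V₂)
    (δ : ℝ) (hδ : 0 < δ)
    (hOSNI : OSNIStorage (linF A B) (linH C) V₂ δ)
    (a : Fin n → Fin n → ℝ)
    (hsymm : ∀ i j, a i j = a j i) (hdiag : ∀ i, a i i = 0)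
    (h01 : ∀ i j, a i j = 0 ∨ a i j = 1)
    (xp : Fin n → ℝ → Vec p) (xc : Fin n → ℝ → Vec q)
    (hcl : NetClosedLoop f h A B C a xp xc) :
    ∀ t : ℝ,
      deriv (fun s =>
          (∑ i, V₁ (xp i s)) +
          (1 / 2) * ∑ i, ∑ j, a i j * V₂ (xc i s - xc j s) -
          ∑ i, ⟪h (xp i s), netOut C a xc i s⟫) t ≤
        -(δ / 2) * ∑ i, ∑ j, a i j *
          ‖deriv (fun s => linH C (xc i s)) t - deriv (fun s => linH C (xc j s)) t‖ ^ 2 ∧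
      -(δ / 2) * ∑ i, ∑ j, a i j *
          ‖deriv (fun s => linH C (xc i s)) t - deriv (fun s => linH C (xc j s)) t‖ ^ 2
        ≤ 0 := by
  classical
  obtain ⟨hcp, hcc⟩ := hcl
  intro t
  set Dc : Fin n → Vec m := fun i => deriv (fun s => linH C (xc i s)) t with hDcdef
  -- nonnegativity of the RHS sum
  have hanonneg : ∀ i j, 0 ≤ a i j := by
    intro i j; rcases h01 i j with h0 | h0 <;> simp [h0]
  have hsum0 : 0 ≤ ∑ i, ∑ j, a i j * ‖Dc i - Dc j‖ ^ 2 := by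
    refine Finset.sum_nonneg fun i _ => Finset.sum_nonneg fun j _ => ?_
    exact mul_nonneg (hanonneg i j) (by positivity)
  have hRHS : -(δ / 2) * ∑ i, ∑ j, a i j * ‖Dc i - Dc j‖ ^ 2 ≤ 0 := by nlinarith
  refine ⟨?_, hRHS⟩
  -- the continuous linear map corresponding to C
  set L : Vec q →L[ℝ] Vec m := LinearMap.toContinuousLinearMap (Matrix.toEuclideanLin C) with hLdef
  have hyc : ∀ i s, HasDerivAt (fun r => linH C (xc i r))
      (L (linF A B (xc i s) (h (xp i s)))) s := by
    intro i s
    exact L.hasFDerivAt.comp_hasDerivAt s (hcc i s)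
  have hDc : ∀ i, HasDerivAt (fun s => linH C (xc i s)) (Dc i) t := fun i =>
    ((hyc i t).differentiableAt).hasDerivAt
  -- plant output derivative
  have hhd : Differentiable ℝ h := hh.differentiable one_ne_zero
  set Dy : Fin n → Vec m := fun i => deriv (fun s => h (xp i s)) t with hDydef
  have hDy : ∀ i, HasDerivAt (fun s => h (xp i s)) (Dy i) t := fun i =>
    (((hhd (xp i t)).comp t (hcp i t).differentiableAt)).hasDerivAt
  -- networked output derivative
  set N : Fin n → Vec m := fun i => netOut C a xc i t with hNdef
  set DN : Fin n → Vec m := fun i => ∑ j, a i j • (Dc i - Dc j) with hDNdef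
  have hN : ∀ i, HasDerivAt (fun s => netOut C a xc i s) (DN i) t := by
    intro i
    have : HasDerivAt (fun s => ∑ j, a i j • (linH C (xc i s) - linH C (xc j s)))
        (∑ j, a i j • (Dc i - Dc j)) t :=
      HasDerivAt.fun_sum fun j _ => ((hDc i).sub (hDc j)).const_smul (a i j)
    exact this
  set y1 : Fin n → Vec m := fun i => h (xp i t) with hy1def
  -- cross term derivative
  have hg : ∀ i, HasDerivAt (fun s => ⟪h (xp i s), netOut C a xc i s⟫)
      (⟪y1 i, DN i⟫ + ⟪Dy i, N i⟫) t := fun i => (hDy i).inner ℝ (hN i)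
  -- storage derivatives
  set dphi : Fin n → ℝ := fun i => deriv (fun s => V₁ (xp i s)) t with hdphidef
  have hphi : ∀ i, HasDerivAt (fun s => V₁ (xp i s)) (dphi i) t := fun i =>
    (((hV₁c.differentiable one_ne_zero) (xp i t)).comp t (hcp i t).differentiableAt).hasDerivAt
  set dpsi : Fin n → Fin n → ℝ := fun i j => deriv (fun s => V₂ (xc i s - xc j s)) t
    with hdpsidef
  have hpsi : ∀ i j, HasDerivAt (fun s => V₂ (xc i s - xc j s)) (dpsi i j) t := fun i j =>
    (((hV₂c.differentiable one_ne_zero) (xc i t - xc j t)).comp t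
      ((hcc i t).sub (hcc j t)).differentiableAt).hasDerivAt
  -- derivative of the whole Lyapunov-like function
  have hW : HasDerivAt (fun s =>
        (∑ i, V₁ (xp i s)) +
        (1 / 2) * ∑ i, ∑ j, a i j * V₂ (xc i s - xc j s) -
        ∑ i, ⟪h (xp i s), netOut C a xc i s⟫)
      ((∑ i, dphi i) + (1 / 2) * (∑ i, ∑ j, a i j * dpsi i j) -
        ∑ i, (⟪y1 i, DN i⟫ + ⟪Dy i, N i⟫)) t := by
    refine HasDerivAt.sub (HasDerivAt.add (HasDerivAt.fun_sum fun i _ => hphi i) ?_)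
      (HasDerivAt.fun_sum fun i _ => hg i)
    exact HasDerivAt.const_mul (1 / 2)
      (HasDerivAt.fun_sum fun i _ => HasDerivAt.fun_sum fun j _ =>
        HasDerivAt.const_mul (a i j) (hpsi i j))
  rw [hW.deriv]
  -- NI bound for the plants
  have hNIb : ∀ i, dphi i ≤ ⟪Dy i, N i⟫ := by
    intro i
    have := hNI (xp i) (fun s => netOut C a xc i s) (hcp i) t
    calc dphi i ≤ ⟪N i, Dy i⟫ := this
      _ = ⟪Dy i, N i⟫ := real_inner_comm _ _
  -- OSNI bound for the controller differences
  have hOS : ∀ i j, dpsi i j ≤ ⟪y1 i - y1 j, Dc i - Dc j⟫ - δ * ‖Dc i - Dc j‖ ^ 2 := by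
    intro i j
    have htraj : IsTrajectory (linF A B) (fun s => xc i s - xc j s)
        (fun s => h (xp i s) - h (xp j s)) := by
      intro s
      have hd := (hcc i s).fun_sub (hcc j s)
      refine hd.congr_deriv ?_
      simp only [linF, map_sub]
      abel
    have hder : deriv (fun s => linH C (xc i s - xc j s)) t = Dc i - Dc j := by
      have heq : (fun s => linH C (xc i s - xc j s))
          = fun s => linH C (xc i s) - linH C (xc j s) := by
        funext s
        exact map_sub (Matrix.toEuclideanLin C) _ _
      rw [heq]
      exact ((hDc i).sub (hDc j)).deriv
    have := hOSNI (fun s => xc i s - xc j s) (fun s => h (xp i s) - h (xp j s)) htraj t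
    rw [hder] at this
    exact this
  -- key symmetry identity
  have hDNinner : ∀ i, ⟪y1 i, DN i⟫ = ∑ j, a i j * ⟪y1 i, Dc i - Dc j⟫ := by
    intro i
    rw [hDNdef]
    simp only
    rw [inner_sum]
    exact Finset.sum_congr rfl fun j _ => real_inner_smul_right _ _ _
  have hswap : ∑ i, ∑ j, a i j * ⟪y1 j, Dc i - Dc j⟫
      = - ∑ i, ∑ j, a i j * ⟪y1 i, Dc i - Dc j⟫ := by
    rw [Finset.sum_comm]
    have hterm : ∀ j i : Fin n, a i j * ⟪y1 j, Dc i - Dc j⟫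
        = -(a j i * ⟪y1 j, Dc j - Dc i⟫) := by
      intro j i
      rw [hsymm i j, show (⟪y1 j, Dc i - Dc j⟫ : ℝ) = -⟪y1 j, Dc j - Dc i⟫ by
        rw [← inner_neg_right, neg_sub]]
      ring
    simp_rw [hterm, Finset.sum_neg_distrib]
  have hkey : ∑ i, ∑ j, a i j * ⟪y1 i - y1 j, Dc i - Dc j⟫
      = 2 * ∑ i, ⟪y1 i, DN i⟫ := by
    have hexp : ∀ i j : Fin n, a i j * ⟪y1 i - y1 j, Dc i - Dc j⟫
        = a i j * ⟪y1 i, Dc i - Dc j⟫ - a i j * ⟪y1 j, Dc i - Dc j⟫ := by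
      intro i j
      rw [inner_sub_left]
      ring
    simp_rw [hexp, Finset.sum_sub_distrib, hswap, hDNinner]
    ring
  -- assemble the inequality
  have hS1 : ∑ i, dphi i ≤ ∑ i, ⟪Dy i, N i⟫ :=
    Finset.sum_le_sum fun i _ => hNIb i
  have hS2 : ∑ i, ∑ j, a i j * dpsi i j
      ≤ (∑ i, ∑ j, a i j * ⟪y1 i - y1 j, Dc i - Dc j⟫)
        - δ * ∑ i, ∑ j, a i j * ‖Dc i - Dc j‖ ^ 2 := by
    have hle : ∑ i, ∑ j, a i j * dpsi i j
        ≤ ∑ i, ∑ j, a i j * (⟪y1 i - y1 j, Dc i - Dc j⟫ - δ * ‖Dc i - Dc j‖ ^ 2) := by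
      refine Finset.sum_le_sum fun i _ => Finset.sum_le_sum fun j _ => ?_
      exact mul_le_mul_of_nonneg_left (hOS i j) (hanonneg i j)
    calc ∑ i, ∑ j, a i j * dpsi i j
        ≤ ∑ i, ∑ j, a i j * (⟪y1 i - y1 j, Dc i - Dc j⟫ - δ * ‖Dc i - Dc j‖ ^ 2) := hle
      _ = (∑ i, ∑ j, a i j * ⟪y1 i - y1 j, Dc i - Dc j⟫)
          - δ * ∑ i, ∑ j, a i j * ‖Dc i - Dc j‖ ^ 2 := by
          simp_rw [mul_sub, Finset.sum_sub_distrib, Finset.mul_sum]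
          ring_nf
          congr 1
          refine Finset.sum_congr rfl fun i _ => ?_
          refine Finset.sum_congr rfl fun j _ => ?_
          ring
  have hsplit : ∑ i, (⟪y1 i, DN i⟫ + ⟪Dy i, N i⟫)
      = (∑ i, ⟪y1 i, DN i⟫) + ∑ i, ⟪Dy i, N i⟫ := Finset.sum_add_distrib
  rw [hsplit]
  rw [hkey] at hS2
  linarith
end
end

section
/- Consider the closed-loop interconnection of n identical nonlinear NI plants H₁ with the networked linear OSNI controller 𝓛ₙ ⊗ M(s) over an undirected connected graph (U₂ = Y₁, U₁ = Y₂), where the controller realization (A,B,C) is minimal with A Hurwitz, Assumptions I and II hold for H₁ and for (A,B,C), and Assumption IV holds with constant γ ∈ (0,1). If along a closed-loop trajectory the controller output differences are constant on a nondegenerate interval, i.e. d/dt(yᶜᵢ(t) − yᶜⱼ(t)) ≡ 0 for every edge (i,j) with a_{ij} = 1, then on that interval the plant outputs agree: yᵢ(t) = yⱼ(t) for all i,j ∈ {1,…,n}, i.e. output consensus holds. -/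
noncomputable section

open scoped RealInnerProductSpace
open Filter

lemma laplacian_zero_edge_eq {n m : ℕ} (a : Fin n → Fin n → ℝ)
    (hsymm : ∀ i j, a i j = a j i) (h01 : ∀ i j, a i j = 0 ∨ a i j = 1)
    (y : Fin n → Vec m) (hz : ∀ i, ∑ j, a i j • (y i - y j) = 0) :
    ∀ i j, a i j = 1 → y i = y j := by
  have hT : ∑ i, ∑ j, a i j * ⟪y i, y i - y j⟫ = 0 := by
    have h1 : ∀ i : Fin n, ∑ j, a i j * ⟪y i, y i - y j⟫
        = ⟪y i, ∑ j, a i j • (y i - y j)⟫ := by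
      intro i
      rw [inner_sum]
      simp only [real_inner_smul_right]
    simp only [h1, hz, inner_zero_right, Finset.sum_const_zero]
  have hT' : ∑ i, ∑ j, a i j * ⟪y j, y i - y j⟫ = 0 := by
    rw [Finset.sum_comm]
    have heq : ∀ j i : Fin n, a i j * ⟪y j, y i - y j⟫ = -(a j i * ⟪y j, y j - y i⟫) := by
      intro j i
      rw [hsymm i j]
      have h2 : (⟪y j, y i - y j⟫ : ℝ) = -⟪y j, y j - y i⟫ := by
        rw [← inner_neg_right]; congr 1; abel
      rw [h2]; ring
    simp only [heq, Finset.sum_neg_distrib]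
    rw [hT, neg_zero]
  have hS : ∑ i, ∑ j, a i j * ‖y i - y j‖ ^ 2 = 0 := by
    have h3 : ∀ i j : Fin n, a i j * ‖y i - y j‖ ^ 2
        = a i j * ⟪y i, y i - y j⟫ - a i j * ⟪y j, y i - y j⟫ := by
      intro i j
      rw [← real_inner_self_eq_norm_sq, inner_sub_left]
      ring
    simp only [h3, Finset.sum_sub_distrib]
    rw [hT, hT', sub_zero]
  intro i j hij
  have hnn : ∀ k l : Fin n, 0 ≤ a k l * ‖y k - y l‖ ^ 2 := by
    intro k l
    rcases h01 k l with h | h <;> rw [h] <;> [simp; skip]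
    rw [one_mul]; positivity
  have hterm : a i j * ‖y i - y j‖ ^ 2 = 0 := by
    have h0 : ∀ k ∈ Finset.univ, (0:ℝ) ≤ ∑ l, a k l * ‖y k - y l‖ ^ 2 :=
      fun k _ => Finset.sum_nonneg fun l _ => hnn k l
    have hrow := (Finset.sum_eq_zero_iff_of_nonneg h0).mp hS i (Finset.mem_univ i)
    exact (Finset.sum_eq_zero_iff_of_nonneg fun l _ => hnn i l).mp hrow j (Finset.mem_univ j)
  rw [hij, one_mul, pow_eq_zero_iff (by norm_num), norm_eq_zero, sub_eq_zero] at hterm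
  exact hterm

/-- In the closed-loop interconnection of n identical nonlinear NI
plants H₁ = (f, h) with the networked linear OSNI controller 𝓛ₙ ⊗ M(s) over an
undirected connected graph, where (A,B,C) is minimal with A Hurwitz, Assumptions I and
II hold for the plant and the controller, and Assumption IV holds with γ ∈ (0,1): if
along a closed-loop trajectory the controller output differences are constant on a
nondegenerate interval (d/dt(yᶜᵢ − yᶜⱼ) ≡ 0 for every edge a_{ij} = 1), then on that
interval the plant outputs agree, i.e. output consensus holds. -/
theorem stmt11 {p q m n : ℕ}
    (f : Vec p → Vec m → Vec p) (h : Vec p → Vec m)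
    (K : NNReal) (hf : LipschitzWith K (Function.uncurry f)) (hh : ContDiff ℝ 1 h)
    (A : Matrix (Fin q) (Fin q) ℝ) (B : Matrix (Fin q) (Fin m) ℝ)
    (C : Matrix (Fin m) (Fin q) ℝ)
    (hHur : IsHurwitz A) (hctrb : Controllable A B) (hobs : Observable A C)
    (a : Fin n → Fin n → ℝ)
    (hsymm : ∀ i j, a i j = a j i) (hdiag : ∀ i, a i i = 0)
    (h01 : ∀ i j, a i j = 0 ∨ a i j = 1)
    (hconn : AdjConnected a)
    (hAIp : AssumptionI f h) (hAIIp : AssumptionII f h)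
    (hAIc : AssumptionI (linF A B) (linH C)) (hAIIc : AssumptionII (linF A B) (linH C))
    (γ : ℝ) (hγ0 : 0 < γ) (hγ1 : γ < 1)
    (hAIV : AssumptionIV f h A B C a γ)
    (xp : Fin n → ℝ → Vec p) (xc : Fin n → ℝ → Vec q)
    (hcl : NetClosedLoop f h A B C a xp xc)
    (ta tb : ℝ) (htatb : ta < tb)
    (hconst : ∀ i j : Fin n, a i j = 1 →
      ∀ t ∈ Set.Icc ta tb,
        deriv (fun s => linH C (xc i s) - linH C (xc j s)) t = 0) :
    ∀ t ∈ Set.Icc ta tb, ∀ i j : Fin n, h (xp i t) = h (xp j t) := by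
  obtain ⟨hclp, hclc⟩ := hcl
  set L : Vec q →L[ℝ] Vec m :=
    LinearMap.toContinuousLinearMap (Matrix.toEuclideanLin C) with hLdef
  -- each controller output is differentiable
  have hDc : ∀ (i : Fin n) (t : ℝ),
      HasDerivAt (fun s => linH C (xc i s))
        (linH C (linF A B (xc i t) (h (xp i t)))) t := by
    intro i t
    exact (L.hasFDerivAt).comp_hasDerivAt t (hclc i t)
  -- edge differences are constant on the interval
  have hedgeconst : ∀ i j : Fin n, a i j = 1 → ∀ t ∈ Set.Icc ta tb,
      linH C (xc i t) - linH C (xc j t) = linH C (xc i ta) - linH C (xc j ta) := by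
    intro i j hij
    have hg : ∀ t : ℝ, HasDerivAt (fun s => linH C (xc i s) - linH C (xc j s))
        (linH C (linF A B (xc i t) (h (xp i t))) - linH C (linF A B (xc j t) (h (xp j t)))) t :=
      fun t => (hDc i t).sub (hDc j t)
    have hg0 : ∀ t ∈ Set.Icc ta tb,
        HasDerivAt (fun s => linH C (xc i s) - linH C (xc j s)) 0 t := by
      intro t ht
      have hd := (hg t).deriv
      rw [hconst i j hij t ht] at hd
      rw [hd]
      exact hg t
    exact constant_of_has_deriv_right_zero
      (fun s _ => (hg s).continuousAt.continuousWithinAt)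
      (fun s hs => (hg0 s (Set.Ico_subset_Icc_self hs)).hasDerivWithinAt)
  -- hence the networked controller output is constant on the interval
  have hnet : ∀ (i : Fin n), ∀ t ∈ Set.Icc ta tb,
      netOut C a xc i t = netOut C a xc i ta := by
    intro i t ht
    unfold netOut
    refine Finset.sum_congr rfl fun j _ => ?_
    rcases h01 i j with h0 | h1
    · simp [h0]
    · rw [h1, one_smul, one_smul]
      exact hedgeconst i j h1 t ht
  -- apply Assumption IV with the constant input/output
  have key := hAIV xp (fun i t => netOut C a xc i t) xc
    (fun i => netOut C a xc i ta) (fun i => netOut C a xc i ta) ta tb htatb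
    hclp hclc (fun i t ht => hnet i t ht) (fun i t ht => hnet i t ht)
  have key' : ∑ i, ‖netOut C a xc i ta‖ ^ 2 ≤ γ * ∑ i, ‖netOut C a xc i ta‖ ^ 2 := by
    simpa only [real_inner_self_eq_norm_sq] using key
  have hsumnn : 0 ≤ ∑ i, ‖netOut C a xc i ta‖ ^ 2 :=
    Finset.sum_nonneg fun i _ => by positivity
  have hsum0 : ∑ i, ‖netOut C a xc i ta‖ ^ 2 = 0 := by nlinarith
  have hU0 : ∀ i : Fin n, netOut C a xc i ta = 0 := by
    intro i
    have := (Finset.sum_eq_zero_iff_of_nonneg fun i (_ : i ∈ Finset.univ) =>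
      (by positivity : (0:ℝ) ≤ ‖netOut C a xc i ta‖ ^ 2)).mp hsum0 i (Finset.mem_univ i)
    rwa [pow_eq_zero_iff (by norm_num), norm_eq_zero] at this
  have hnet0 : ∀ (i : Fin n), ∀ t ∈ Set.Icc ta tb, netOut C a xc i t = 0 := by
    intro i t ht
    rw [hnet i t ht, hU0 i]
  -- edgewise equality of controller outputs on the interval
  have hedge : ∀ i j : Fin n, a i j = 1 → ∀ t ∈ Set.Icc ta tb,
      linH C (xc i t) = linH C (xc j t) := by
    intro i j hij t ht
    exact laplacian_zero_edge_eq a hsymm h01 (fun k => linH C (xc k t))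
      (fun k => hnet0 k t ht) i j hij
  -- extend to all pairs via connectivity
  have hall : ∀ i j : Fin n, ∀ t ∈ Set.Icc ta tb,
      linH C (xc i t) = linH C (xc j t) := by
    intro i j
    induction hconn i j with
    | refl => intro t _; rfl
    | tail _ he ih => intro t ht; rw [ih t ht]; exact hedge _ _ he t ht
  -- conclude plant output consensus via Assumptions I and II for the controller
  intro t ht i j
  set e : ℝ → Vec q := fun s => xc i s - xc j s with hedef
  set u : ℝ → Vec m := fun s => h (xp i s) - h (xp j s) with hudef
  have htraj : IsTrajectory (linF A B) e u := by
    intro s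
    have hsub := (hclc i s).sub (hclc j s)
    have heq : linF A B (xc i s) (h (xp i s)) - linF A B (xc j s) (h (xp j s))
        = linF A B (e s) (u s) := by
      simp only [hedef, hudef, linF, map_sub]
      abel
    rw [heq] at hsub
    exact hsub
  have hy0 : ∀ s ∈ Set.Icc ta tb, linH C (e s) = 0 := by
    intro s hs
    have heq : linH C (e s) = linH C (xc i s) - linH C (xc j s) := by
      simp only [hedef, linH, map_sub]
    rw [heq, hall i j s hs, sub_self]
  have hstate0 : ∀ s ∈ Set.Icc ta tb, e s = 0 :=
    ((hAIc e u htraj ta tb htatb).2).mpr hy0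
  have hinput0 : ∀ s ∈ Set.Icc ta tb, u s = 0 :=
    (hAIIc e u htraj ta tb htatb).2 hstate0
  have := hinput0 t ht
  rw [hudef] at this
  exact sub_eq_zero.mp this
end
end
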